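/- arXiv:1904.04936 — 8 statements merged into one kernel-verified Lean document; each statement's English description precedes it below -/
import Mathlib

section
/- Let (X, μ) be a probability space, T : X → X a measurable map, and (B_n) a sequence of measurable sets with μ(B_n) > 0 for every n. For k ≥ 0 and n define θ_k^{(n)} = μ(B_n ∩ ⋂_{i=1}^{k} T^{-i}(B_nᶜ))/μ(B_n) (so θ_0^{(n)} = 1) and q_k^{(n)} = μ(B_n ∩ ⋂_{i=1}^{k} T^{-i}(B_nᶜ) ∩ T^{-(k+1)}(B_n))/μ(B_n). Suppose that for every k ≥ 0 the limit q_k := lim_{n→∞} q_k^{(n)} exists. Then: (i) for every k ≥ 0 the limit θ_k := lim_{n→∞} θ_k^{(n)} exists and equals 1 − Σ_{j=0}^{k−1} q_j; (ii) the series Σ_{k=0}^{∞} q_k converges; and (iii) lim_{k→∞} θ_k = 1 − Σ_{k=0}^{∞} q_k. (Generalized O'Brien formula: the spectral-formula value 1 − Σ q_k of the extremal index equals the double limit lim_{k→∞} lim_{n→∞} θ_k^{(n)}.) -/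
open MeasureTheory Set Filter

/-- Generalized O'Brien formula. If all the finite-resolution cluster coefficients
`q_k^{(n)}` converge as `n → ∞`, then each `θ_k^{(n)}` converges to `1 − Σ_{j<k} q_j`,
the series `Σ q_k` converges, and `lim_k θ_k = 1 − Σ_{k} q_k`. -/
theorem stmt1 {X : Type*} [MeasurableSpace X] (μ : Measure X) [IsProbabilityMeasure μ]
    (T : X → X) (hT : Measurable T)
    (B : ℕ → Set X) (hBmeas : ∀ n, MeasurableSet (B n)) (hBpos : ∀ n, 0 < μ (B n))
    (θ : ℕ → ℕ → ℝ)
    (hθ : ∀ k n, θ k n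
      = (μ (B n ∩ ⋂ i ∈ Finset.Icc 1 k, (T^[i]) ⁻¹' (B n)ᶜ)).toReal / (μ (B n)).toReal)
    (qn : ℕ → ℕ → ℝ)
    (hqn : ∀ k n, qn k n
      = (μ (B n ∩ (⋂ i ∈ Finset.Icc 1 k, (T^[i]) ⁻¹' (B n)ᶜ)
          ∩ (T^[k+1]) ⁻¹' (B n))).toReal / (μ (B n)).toReal)
    (q : ℕ → ℝ)
    (hlim : ∀ k, Tendsto (fun n => qn k n) atTop (nhds (q k))) :
    (∀ k, Tendsto (fun n => θ k n) atTop (nhds (1 - ∑ j ∈ Finset.range k, q j))) ∧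
    Summable q ∧
    Tendsto (fun k => 1 - ∑ j ∈ Finset.range k, q j) atTop (nhds (1 - ∑' k, q k)) := by
  have hBne : ∀ n, (μ (B n)).toReal ≠ 0 := by
    intro n
    have h1 : μ (B n) ≠ 0 := (hBpos n).ne'
    have h2 : μ (B n) ≠ ⊤ := measure_ne_top μ _
    simp [ENNReal.toReal_ne_zero, h1, h2]
  -- key pointwise identity
  have key : ∀ k n, θ k n = 1 - ∑ j ∈ Finset.range k, qn j n := by
    intro k n
    induction k with
    | zero =>
      simp [hθ, div_self (hBne n)]
    | succ k ih =>
      have hstep : θ (k + 1) n = θ k n - qn k n := by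
        set A := B n ∩ ⋂ i ∈ Finset.Icc 1 k, (T^[i]) ⁻¹' (B n)ᶜ with hA
        set C := (T^[k+1]) ⁻¹' (B n) with hC
        have hCmeas : MeasurableSet C := (hT.iterate (k+1)) (hBmeas n)
        have hset : B n ∩ ⋂ i ∈ Finset.Icc 1 (k+1), (T^[i]) ⁻¹' (B n)ᶜ = A \ C := by
          rw [← Finset.insert_Icc_right_eq_Icc_add_one (Nat.succ_le_succ (Nat.zero_le k))]
          rw [Finset.set_biInter_insert]
          rw [hA, hC, Set.diff_eq]
          ext x; simp; tauto
        have hmeq : μ (A ∩ C) + μ (A \ C) = μ A := measure_inter_add_diff A hCmeas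
        have hfin1 : μ (A ∩ C) ≠ ⊤ := measure_ne_top μ _
        have hfin2 : μ (A \ C) ≠ ⊤ := measure_ne_top μ _
        have hreal : (μ (A ∩ C)).toReal + (μ (A \ C)).toReal = (μ A).toReal := by
          rw [← ENNReal.toReal_add hfin1 hfin2, hmeq]
        rw [hθ, hθ, hqn, hset]
        have : (μ (A \ C)).toReal = (μ A).toReal - (μ (A ∩ C)).toReal := by linarith
        rw [this, sub_div]
      rw [hstep, ih, Finset.sum_range_succ]
      ring
  have hθlim : ∀ k, Tendsto (fun n => θ k n) atTop (nhds (1 - ∑ j ∈ Finset.range k, q j)) := by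
    intro k
    have hsum : Tendsto (fun n => ∑ j ∈ Finset.range k, qn j n) atTop
        (nhds (∑ j ∈ Finset.range k, q j)) :=
      tendsto_finset_sum _ (fun j _ => hlim j)
    simpa only [← key] using hsum.const_sub 1
  have hq0 : ∀ j, 0 ≤ q j := by
    intro j
    refine ge_of_tendsto' (hlim j) ?_
    intro n
    rw [hqn]
    positivity
  have hθ0 : ∀ k n, 0 ≤ θ k n := by
    intro k n; rw [hθ]; positivity
  have hbound : ∀ k, ∑ j ∈ Finset.range k, q j ≤ 1 := by
    intro k
    have hn : ∀ n, ∑ j ∈ Finset.range k, qn j n ≤ 1 := by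
      intro n
      have := hθ0 k n
      rw [key k n] at this
      linarith
    have hsum : Tendsto (fun n => ∑ j ∈ Finset.range k, qn j n) atTop
        (nhds (∑ j ∈ Finset.range k, q j)) :=
      tendsto_finset_sum _ (fun j _ => hlim j)
    exact le_of_tendsto' hsum hn
  have hsummable : Summable q :=
    summable_of_sum_range_le hq0 hbound
  refine ⟨hθlim, hsummable, ?_⟩
  exact hsummable.hasSum.tendsto_sum_nat.const_sub 1
end

section
/- Work on the circle 𝕋 = ℝ/ℤ with its quotient metric d, Lebesgue (Haar) measure λ, and open balls B(z,r). Let h : 𝕋 → ℝ be measurable with 0 < ι ≤ h(x) ≤ H for all x, let μ = h·λ, let T : 𝕋 → 𝕋 be continuous, let f : 𝕋 → 𝕋 be continuous, and let ν be a Borel probability measure on 𝕋. Fix k ≥ 0 and assume ν({z : T^{k+1}(z) = f^{k+1}(z)}) = 0. Let (r_n) be a decreasing sequence with 0 < r_n < 1/2 and r_n → 0. Then the ratio [∫ μ( B(z,r_n) ∩ ⋂_{j=1}^{k} T^{-j}(B(f^{j}(z), r_n))ᶜ ∩ T^{-(k+1)}(B(f^{k+1}(z), r_n)) ) dν(z)]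 / [∫ μ(B(z,r_n)) dν(z)] tends to 0 as n → ∞. (Hence every cluster coefficient q_k vanishes and the extremal index of the moving-target process equals 1.) -/
open MeasureTheory Set Filter Metric

/-- Moving target with continuous noise on the circle: if the measure `μ` has density
`h` bounded between `ι > 0` and `H`, the center of the target ball moves under a
continuous map `f`, and `ν({z : T^{k+1} z = f^{k+1} z}) = 0`, then the finite-resolution
cluster coefficient `q_k^{(n)}` tends to `0` along any decreasing sequence of radii
`r_n → 0` (hence the extremal index is `1`). -/
theorem stmt2 (h : UnitAddCircle → ℝ) (hmeas : Measurable h)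
    (ι H : ℝ) (hι : 0 < ι) (hbd : ∀ x, ι ≤ h x ∧ h x ≤ H)
    (μ : Measure UnitAddCircle)
    (hμ : μ = volume.withDensity fun x => ENNReal.ofReal (h x))
    (T f : UnitAddCircle → UnitAddCircle) (hT : Continuous T) (hf : Continuous f)
    (ν : Measure UnitAddCircle) [IsProbabilityMeasure ν]
    (k : ℕ) (hν : ν {z | T^[k+1] z = f^[k+1] z} = 0)
    (r : ℕ → ℝ) (hr : ∀ n, 0 < r n ∧ r n < 1/2) (hanti : Antitone r)
    (hr0 : Tendsto r atTop (nhds 0)) :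
    Tendsto (fun n =>
      (∫⁻ z, μ (ball z (r n)
          ∩ (⋂ j ∈ Finset.Icc 1 k, (T^[j]) ⁻¹' (ball (f^[j] z) (r n))ᶜ)
          ∩ (T^[k+1]) ⁻¹' ball (f^[k+1] z) (r n)) ∂ν)
        / ∫⁻ z, μ (ball z (r n)) ∂ν)
      atTop (nhds 0) := by
  have hTk : Continuous (T^[k+1]) := hT.iterate (k+1)
  have hfk : Continuous (f^[k+1]) := hf.iterate (k+1)
  -- volume of small balls
  have hball : ∀ (z : UnitAddCircle) (n : ℕ),
      volume (ball z (r n)) = ENNReal.ofReal (2 * r n) := by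
    intro z n
    rw [← measure_congr AddCircle.closedBall_ae_eq_ball, AddCircle.volume_closedBall,
      min_eq_right (by linarith [(hr n).2] : 2 * r n ≤ 1)]
  have h2r : ∀ n, (0:ℝ) < 2 * r n := fun n => by linarith [(hr n).1]
  have hofr_ne0 : ∀ n, ENNReal.ofReal (2 * r n) ≠ 0 := fun n => by
    simp [ENNReal.ofReal_eq_zero, not_le, h2r n, (hr n).1]
  -- the key sets
  set E : ℕ → UnitAddCircle → Set UnitAddCircle := fun n z =>
    ball z (r n) ∩ (T^[k+1]) ⁻¹' ball (f^[k+1] z) (r n) with hE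
  have hEopen : ∀ n z, IsOpen (E n z) := fun n z =>
    isOpen_ball.inter (isOpen_ball.preimage hTk)
  -- measurability of z ↦ volume (E n z)
  have hmeasE : ∀ n, Measurable fun z => volume (E n z) := by
    intro n
    have h1 : IsOpen {p : UnitAddCircle × UnitAddCircle | dist p.2 p.1 < r n} :=
      isOpen_lt (continuous_snd.dist continuous_fst) continuous_const
    have h2 : IsOpen {p : UnitAddCircle × UnitAddCircle |
        dist (T^[k+1] p.2) (f^[k+1] p.1) < r n} :=
      isOpen_lt ((hTk.comp continuous_snd).dist (hfk.comp continuous_fst)) continuous_const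
    have hS : MeasurableSet {p : UnitAddCircle × UnitAddCircle |
        dist p.2 p.1 < r n ∧ dist (T^[k+1] p.2) (f^[k+1] p.1) < r n} := by
      rw [setOf_and]; exact (h1.inter h2).measurableSet
    have heq : ∀ z, E n z = Prod.mk z ⁻¹' {p : UnitAddCircle × UnitAddCircle |
        dist p.2 p.1 < r n ∧ dist (T^[k+1] p.2) (f^[k+1] p.1) < r n} := by
      intro z; ext x; simp [hE, mem_ball]
    simp only [heq]
    exact measurable_measure_prodMk_left (ν := (volume : Measure UnitAddCircle)) hS
  -- pointwise bounds on μ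
  have hupper : ∀ n z, μ (E n z) ≤ ENNReal.ofReal H * volume (E n z) := by
    intro n z
    rw [hμ, withDensity_apply _ (hEopen n z).measurableSet]
    calc ∫⁻ x in E n z, ENNReal.ofReal (h x) ∂volume
        ≤ ∫⁻ _ in E n z, ENNReal.ofReal H ∂volume :=
          setLIntegral_mono measurable_const fun x _ =>
            ENNReal.ofReal_le_ofReal (hbd x).2
      _ = ENNReal.ofReal H * volume (E n z) := setLIntegral_const _ _
  have hlower : ∀ n z, ENNReal.ofReal ι * ENNReal.ofReal (2 * r n) ≤ μ (ball z (r n)) := by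
    intro n z
    rw [hμ, withDensity_apply _ measurableSet_ball]
    calc ENNReal.ofReal ι * ENNReal.ofReal (2 * r n)
        = ∫⁻ _ in ball z (r n), ENNReal.ofReal ι ∂volume := by
          rw [setLIntegral_const, hball]
      _ ≤ ∫⁻ x in ball z (r n), ENNReal.ofReal (h x) ∂volume :=
          setLIntegral_mono hmeas.ennreal_ofReal fun x _ =>
            ENNReal.ofReal_le_ofReal (hbd x).1
  -- integrals
  set I : ℕ → ENNReal := fun n => ∫⁻ z, volume (E n z) ∂ν with hI
  have hNum : ∀ n,
      (∫⁻ z, μ (ball z (r n)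
          ∩ (⋂ j ∈ Finset.Icc 1 k, (T^[j]) ⁻¹' (ball (f^[j] z) (r n))ᶜ)
          ∩ (T^[k+1]) ⁻¹' ball (f^[k+1] z) (r n)) ∂ν) ≤ ENNReal.ofReal H * I n := by
    intro n
    calc (∫⁻ z, μ (ball z (r n)
          ∩ (⋂ j ∈ Finset.Icc 1 k, (T^[j]) ⁻¹' (ball (f^[j] z) (r n))ᶜ)
          ∩ (T^[k+1]) ⁻¹' ball (f^[k+1] z) (r n)) ∂ν)
        ≤ ∫⁻ z, ENNReal.ofReal H * volume (E n z) ∂ν := by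
          refine lintegral_mono fun z => le_trans (measure_mono ?_) (hupper n z)
          rintro x ⟨⟨hx1, -⟩, hx2⟩
          exact ⟨hx1, hx2⟩
      _ = ENNReal.ofReal H * I n :=
          lintegral_const_mul' _ _ ENNReal.ofReal_ne_top
  have hDen : ∀ n, ENNReal.ofReal ι * ENNReal.ofReal (2 * r n)
      ≤ ∫⁻ z, μ (ball z (r n)) ∂ν := by
    intro n
    calc ENNReal.ofReal ι * ENNReal.ofReal (2 * r n)
        = ∫⁻ _, ENNReal.ofReal ι * ENNReal.ofReal (2 * r n) ∂ν := by
          rw [lintegral_const, measure_univ, mul_one]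
      _ ≤ ∫⁻ z, μ (ball z (r n)) ∂ν := lintegral_mono fun z => hlower n z
  -- the dominated-convergence part
  have hJ : Tendsto (fun n => (ENNReal.ofReal (2 * r n))⁻¹ * I n) atTop (nhds 0) := by
    have heq : ∀ n, (ENNReal.ofReal (2 * r n))⁻¹ * I n
        = ∫⁻ z, (ENNReal.ofReal (2 * r n))⁻¹ * volume (E n z) ∂ν := fun n =>
      (lintegral_const_mul' _ _ (by simp [hofr_ne0 n, (hr n).1])).symm
    have h0 : (0 : ENNReal) = ∫⁻ _, (0:ENNReal) ∂ν := by simp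
    simp only [heq]
    rw [h0]
    refine tendsto_lintegral_of_dominated_convergence (fun _ => 1)
      (fun n => measurable_const.mul (hmeasE n)) (fun n => ?_) (by simp) ?_
    · refine Eventually.of_forall fun z => ?_
      have hle : volume (E n z) ≤ ENNReal.ofReal (2 * r n) := by
        rw [← hball z n]; exact measure_mono inter_subset_left
      calc (ENNReal.ofReal (2 * r n))⁻¹ * volume (E n z)
          ≤ (ENNReal.ofReal (2 * r n))⁻¹ * ENNReal.ofReal (2 * r n) :=
            mul_le_mul_right hle _
        _ = 1 := ENNReal.inv_mul_cancel (hofr_ne0 n) ENNReal.ofReal_ne_top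
    · have hae : ∀ᵐ z ∂ν, T^[k+1] z ≠ f^[k+1] z := by
        rw [ae_iff]
        simpa [not_not] using hν
      filter_upwards [hae] with z hz
      have hδ : 0 < dist (T^[k+1] z) (f^[k+1] z) := dist_pos.mpr hz
      set δ := dist (T^[k+1] z) (f^[k+1] z)
      obtain ⟨ε, hε, hcont⟩ := Metric.continuousAt_iff.mp (hTk.continuousAt (x := z)) (δ/2) (by linarith)
      have hev : ∀ᶠ n in atTop, r n < min ε (δ/2) :=
        hr0.eventually (gt_mem_nhds (by positivity))
      have hzero : ∀ᶠ n in atTop,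
          (ENNReal.ofReal (2 * r n))⁻¹ * volume (E n z) = 0 := by
        filter_upwards [hev] with n hn
        have hempty : E n z = ∅ := by
          rw [eq_empty_iff_forall_notMem]
          rintro x ⟨hx1, hx2⟩
          simp only [mem_preimage, mem_ball] at hx1 hx2
          have h1 : dist (T^[k+1] x) (T^[k+1] z) < δ/2 :=
            hcont (lt_of_lt_of_le hx1 (le_trans hn.le (min_le_left _ _)))
          have h2 : dist (T^[k+1] x) (f^[k+1] z) < δ/2 :=
            lt_of_lt_of_le hx2 (le_trans hn.le (min_le_right _ _))
          have := dist_triangle (T^[k+1] z) (T^[k+1] x) (f^[k+1] z)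
          rw [dist_comm (T^[k+1] z) (T^[k+1] x)] at this
          have : δ ≤ dist (T^[k+1] x) (T^[k+1] z) + dist (T^[k+1] x) (f^[k+1] z) := this
          linarith
        simp [hempty]
      exact Tendsto.congr' (hzero.mono fun n hn => hn.symm) tendsto_const_nhds
  -- assemble
  have hconst_ne_top : ENNReal.ofReal H * (ENNReal.ofReal ι)⁻¹ ≠ ⊤ := by
    refine ENNReal.mul_ne_top ENNReal.ofReal_ne_top ?_
    simp [ENNReal.inv_ne_top, ENNReal.ofReal_eq_zero, not_le, hι]
  have hG : Tendsto (fun n => ENNReal.ofReal H * (ENNReal.ofReal ι)⁻¹ *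
      ((ENNReal.ofReal (2 * r n))⁻¹ * I n)) atTop (nhds 0) := by
    have := ENNReal.Tendsto.const_mul (a := ENNReal.ofReal H * (ENNReal.ofReal ι)⁻¹) hJ
      (Or.inr hconst_ne_top)
    simpa using this
  refine tendsto_of_tendsto_of_tendsto_of_le_of_le tendsto_const_nhds hG
    (fun n => zero_le) fun n => ?_
  calc (∫⁻ z, μ (ball z (r n)
          ∩ (⋂ j ∈ Finset.Icc 1 k, (T^[j]) ⁻¹' (ball (f^[j] z) (r n))ᶜ)
          ∩ (T^[k+1]) ⁻¹' ball (f^[k+1] z) (r n)) ∂ν)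
        / ∫⁻ z, μ (ball z (r n)) ∂ν
      ≤ (ENNReal.ofReal H * I n) / (ENNReal.ofReal ι * ENNReal.ofReal (2 * r n)) :=
        ENNReal.div_le_div (hNum n) (hDen n)
    _ = ENNReal.ofReal H * (ENNReal.ofReal ι)⁻¹ * ((ENNReal.ofReal (2 * r n))⁻¹ * I n) := by
        rw [div_eq_mul_inv, ENNReal.mul_inv (Or.inl (by simp [ENNReal.ofReal_eq_zero, not_le, hι]))
          (Or.inl ENNReal.ofReal_ne_top)]
        ring
end

section
/- Let p, q be positive coprime integers with 0 < p < q, and on the circle 𝕋 = ℝ/ℤ let f_0(x) = 2x mod 1 and f_1(x) = 2x + p/q mod 1. Then the set of integers m ≥ 2 for which there exists a word (ξ_1,…,ξ_m) ∈ {0,1}^m with ξ_1 = 1 such that f_{ξ_m} ∘ ⋯ ∘ f_{ξ_1}(0) = 0 while f_{ξ_j} ∘ ⋯ ∘ f_{ξ_1}(0) ≠ 0 for all 1 ≤ j ≤ m − 1, is infinite. (Hence for rational translation b, infinitely many of the cluster coefficients q_k of the annealed random system are nonzero.) -/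
open MeasureTheory Set

/-- The random map on the circle: `dstep b false x = 2x mod 1`,
`dstep b true x = 2x + b mod 1`. -/
noncomputable def dstep (b : ℝ) : Bool → UnitAddCircle → UnitAddCircle
  | false, x => x + x
  | true, x => x + x + (b : UnitAddCircle)

/-- The concatenation `f_{ξ_m} ∘ ⋯ ∘ f_{ξ_1}` associated to the word
`l = [ξ_1, …, ξ_m]` (the first letter of the list is applied first). -/
noncomputable def wordMap (b : ℝ) (l : List Bool) (x : UnitAddCircle) : UnitAddCircle :=
  l.foldl (fun y s => dstep b s y) x

/-- Binary digits of `n`, most significant bit first. -/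
def msbits (n : ℕ) : List Bool :=
  if h : n = 0 then [] else msbits (n / 2) ++ [n % 2 == 1]
decreasing_by exact Nat.div_lt_self (Nat.pos_of_ne_zero h) one_lt_two

lemma msbits_zero : msbits 0 = [] := by rw [msbits]; simp

lemma msbits_ne {n : ℕ} (h : n ≠ 0) : msbits n = msbits (n / 2) ++ [n % 2 == 1] := by
  rw [msbits]; simp [h]

lemma msbits_len {n : ℕ} (h : n ≠ 0) :
    (msbits n).length = (msbits (n / 2)).length + 1 := by
  rw [msbits_ne h]; simp

lemma lt_two_pow_len (n : ℕ) : n < 2 ^ (msbits n).length := by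
  induction n using Nat.strong_induction_on with
  | _ n ih =>
    by_cases h : n = 0
    · simp [h, msbits_zero]
    · have h1 := ih (n / 2) (Nat.div_lt_self (Nat.pos_of_ne_zero h) one_lt_two)
      have h2 : 2 ^ (msbits n).length = 2 * 2 ^ (msbits (n / 2)).length := by
        rw [msbits_len h, pow_succ]; ring
      omega

lemma two_pow_len_le {n : ℕ} (h : n ≠ 0) : 2 ^ ((msbits n).length - 1) ≤ n := by
  induction n using Nat.strong_induction_on with
  | _ n ih =>
    by_cases h2 : n / 2 = 0
    · have hn1 : n = 1 := by omega
      subst hn1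
      rw [msbits_len (by norm_num)]
      simp [h2, msbits_zero]
    · have h1 := ih (n / 2) (Nat.div_lt_self (Nat.pos_of_ne_zero h) one_lt_two) h2
      have hL : 0 < (msbits (n / 2)).length := by
        rw [msbits_len h2]; omega
      have h3 : 2 ^ ((msbits n).length - 1) = 2 * 2 ^ ((msbits (n / 2)).length - 1) := by
        rw [msbits_len h, Nat.add_sub_cancel, ← pow_succ']
        congr 1
        omega
      omega

lemma msbits_take (i : ℕ) : ∀ n : ℕ,
    (msbits n).take ((msbits n).length - i) = msbits (n / 2 ^ i) := by
  induction i with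
  | zero => intro n; simp
  | succ i ih =>
    intro n
    by_cases h : n = 0
    · simp [h, msbits_zero, Nat.zero_div]
    · have hd : n / 2 ^ (i + 1) = (n / 2) / 2 ^ i := by
        rw [Nat.div_div_eq_div_mul, pow_succ']
      rw [hd, ← ih (n / 2), msbits_ne h]
      simp only [List.length_append, List.length_cons, List.length_nil]
      rw [List.take_append_of_le_length (by omega)]
      congr 1
      omega

lemma msbits_head {n : ℕ} (h : n ≠ 0) : (msbits n).head? = some true := by
  induction n using Nat.strong_induction_on with
  | _ n ih =>
    by_cases h2 : n / 2 = 0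
    · have hn1 : n = 1 := by omega
      subst hn1
      rw [msbits_ne (by norm_num)]
      simp [msbits_zero]
    · have h1 := ih (n / 2) (Nat.div_lt_self (Nat.pos_of_ne_zero h) one_lt_two) h2
      rw [msbits_ne h]
      rcases hc : msbits (n / 2) with _ | ⟨a, t⟩
      · rw [hc] at h1; simp at h1
      · rw [hc] at h1; simp at h1
        simp [h1]

lemma wordMap_append (b : ℝ) (l : List Bool) (s : Bool) (x : UnitAddCircle) :
    wordMap b (l ++ [s]) x = dstep b s (wordMap b l x) := by
  unfold wordMap
  rw [List.foldl_append]
  simp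

lemma wordMap_msbits (b : ℝ) (n : ℕ) :
    wordMap b (msbits n) 0 = n • ((b : UnitAddCircle)) := by
  induction n using Nat.strong_induction_on with
  | _ n ih =>
    by_cases h : n = 0
    · simp [h, msbits_zero, wordMap]
    · have h1 := ih (n / 2) (Nat.div_lt_self (Nat.pos_of_ne_zero h) one_lt_two)
      rw [msbits_ne h, wordMap_append, h1]
      rcases Nat.mod_two_eq_zero_or_one n with hm | hm
      · have : n = n / 2 + n / 2 := by omega
        rw [hm]
        show (n / 2) • (b : UnitAddCircle) + (n / 2) • (b : UnitAddCircle) = n • _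
        rw [← add_nsmul, ← this]
      · have : n = n / 2 + n / 2 + 1 := by omega
        rw [hm]
        show (n / 2) • (b : UnitAddCircle) + (n / 2) • (b : UnitAddCircle) + b = n • _
        conv_rhs => rw [this]
        rw [succ_nsmul, ← add_nsmul]

lemma nsmul_coe_eq_zero_iff (p q n : ℕ) (hq : 0 < q) :
    n • ((((p : ℝ) / q : ℝ)) : UnitAddCircle) = 0 ↔ q ∣ n * p := by
  rw [← AddCircle.coe_nsmul, AddCircle.coe_eq_zero_iff]
  have hq0 : (q : ℝ) ≠ 0 := by positivity
  constructor
  · rintro ⟨z, hz⟩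
    simp only [zsmul_eq_mul, mul_one] at hz
    have : (z : ℝ) * q = (n : ℝ) * p := by
      field_simp [nsmul_eq_mul] at hz ⊢
      rw [nsmul_eq_mul] at hz
      rw [hz, mul_div_assoc', div_mul_cancel₀ _ hq0]; ring
    have hz2 : z * (q : ℤ) = (n : ℤ) * p := by exact_mod_cast this
    have : (q : ℤ) ∣ (n : ℤ) * p := ⟨z, by linarith⟩
    exact_mod_cast this
  · rintro ⟨c, hc⟩
    refine ⟨(c : ℤ), ?_⟩
    simp only [zsmul_eq_mul, mul_one, nsmul_eq_mul]
    have h2 : c * q = n * p := by rw [hc, mul_comm]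
    field_simp
    exact_mod_cast h2

lemma key_not_dvd (q k i : ℕ) (hq : 2 ≤ q) (hk : 1 ≤ k) (hi : 1 ≤ i)
    (hi2 : 2 ^ i ≤ q * (2 ^ k - 1)) : ¬ q ∣ (q * (2 ^ k - 1)) / 2 ^ i := by
  set M := 2 ^ k - 1 with hM
  set r := M % 2 ^ i with hr
  set d := M / 2 ^ i with hd2
  have hpow : 0 < 2 ^ i := Nat.pow_pos (by norm_num)
  have hMdm : 2 ^ i * d + r = M := Nat.div_add_mod M (2 ^ i)
  have hN : q * M = q * r + (q * d) * 2 ^ i := by rw [← hMdm]; ring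
  have hdiv : (q * M) / 2 ^ i = (q * r) / 2 ^ i + q * d := by
    rw [hN, Nat.add_mul_div_right _ _ hpow]
  have hub : (q * r) / 2 ^ i < q := by
    apply Nat.div_lt_of_lt_mul
    have : r < 2 ^ i := Nat.mod_lt _ hpow
    calc q * r < q * 2 ^ i := mul_lt_mul_of_pos_left this (by omega)
    _ = 2 ^ i * q := by ring
  have hlb : 1 ≤ (q * r) / 2 ^ i := by
    rw [Nat.le_div_iff_mul_le hpow, one_mul]
    by_cases hik : i ≤ k
    · have hri : r = 2 ^ i - 1 := by
        have hkk : 2 ^ k = 2 ^ i * 2 ^ (k - i) := by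
          rw [← pow_add]; congr 1; omega
        have hpos : 1 ≤ 2 ^ (k - i) := Nat.one_le_two_pow
        have hpi : 0 < 2 ^ i := hpow
        have hMeq : M = (2 ^ i - 1) + 2 ^ i * (2 ^ (k - i) - 1) := by
          rw [hM, hkk]
          have h6 : 2 ^ i * (2 ^ (k-i) - 1) = 2 ^ i * 2 ^ (k-i) - 2 ^ i := by
            rw [Nat.mul_sub_one]
          have h7 : 2 ^ i ≤ 2 ^ i * 2 ^ (k - i) := Nat.le_mul_of_pos_right _ (by omega)
          omega
        rw [hr, hMeq, Nat.add_mul_mod_self_left]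
        exact Nat.mod_eq_of_lt (by omega)
      have h2i : 2 ≤ 2 ^ i := by
        calc 2 = 2 ^ 1 := rfl
        _ ≤ 2 ^ i := Nat.pow_le_pow_right (by norm_num) hi
      have h5 : 2 * (2 ^ i - 1) ≤ q * r := by
        rw [hri]; exact Nat.mul_le_mul hq (le_refl _)
      omega
    · have hMlt : M < 2 ^ i := by
        have : 2 ^ k ≤ 2 ^ i := Nat.pow_le_pow_right (by norm_num) (by omega)
        omega
      have hri : r = M := Nat.mod_eq_of_lt hMlt
      rw [hri]
      exact hi2
  intro hdvd
  rw [hdiv] at hdvd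
  have : q ∣ (q * r) / 2 ^ i := (Nat.dvd_add_right (Dvd.intro d rfl)).mp
    (by rwa [add_comm] at hdvd)
  have := Nat.le_of_dvd (by omega) this
  omega

/-- For rational translation `b = p/q` in lowest terms, there are infinitely many
lengths `m ≥ 2` admitting a word `(ξ_1,…,ξ_m)` with `ξ_1 = 1` whose concatenation
returns `0` to itself after exactly `m` steps and not before: hence infinitely many
cluster coefficients `q_{m−1}` are nonzero. -/
theorem stmt5 (p q : ℕ) (hp : 0 < p) (hpq : p < q) (hco : Nat.Coprime p q) :
    {m : ℕ | 2 ≤ m ∧ ∃ l : List Bool, l.length = m ∧ l.head? = some true ∧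
      wordMap ((p : ℝ) / q) l 0 = 0 ∧
      ∀ j : ℕ, 1 ≤ j → j ≤ m - 1 → wordMap ((p : ℝ) / q) (l.take j) 0 ≠ 0}.Infinite := by
  have hq2 : 2 ≤ q := by omega
  apply Set.infinite_of_forall_exists_gt
  intro a
  set k := a + 1 with hk
  set N := q * (2 ^ k - 1) with hN
  have hpk : 2 ≤ 2 ^ k := by
    calc 2 = 2 ^ 1 := rfl
    _ ≤ 2 ^ k := Nat.pow_le_pow_right (by norm_num) (by omega)
  have hNge : 2 ^ k ≤ N := by
    have : 2 * (2 ^ k - 1) ≤ N := Nat.mul_le_mul hq2 le_rfl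
    omega
  have hNne : N ≠ 0 := by omega
  set l := msbits N with hl
  set m := l.length with hm
  have hlt : N < 2 ^ m := lt_two_pow_len N
  have hle : 2 ^ (m - 1) ≤ N := two_pow_len_le hNne
  have hkm : k < m := by
    have : 2 ^ k < 2 ^ m := by omega
    exact (Nat.pow_lt_pow_iff_right (by norm_num)).mp this
  have hm2 : 2 ≤ m := by omega
  refine ⟨m, ⟨hm2, l, rfl, msbits_head hNne, ?_, ?_⟩, by omega⟩
  · rw [hl, wordMap_msbits, nsmul_coe_eq_zero_iff p q N (by omega)]
    exact Dvd.dvd.mul_right (Dvd.intro _ rfl) p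
  · intro j hj1 hj2 hzero
    set i := m - j with hi
    have hji : j = m - i := by omega
    have hi1 : 1 ≤ i := by omega
    have hi2 : i ≤ m - 1 := by omega
    have htk : l.take j = msbits (N / 2 ^ i) := by
      rw [hji, hl, show m = (msbits N).length from hm ▸ congrArg List.length hl,
        msbits_take]
    rw [htk, wordMap_msbits, nsmul_coe_eq_zero_iff p q _ (by omega)] at hzero
    have hdvd : q ∣ N / 2 ^ i :=
      (Nat.Coprime.dvd_of_dvd_mul_right hco.symm) hzero
    have hpow_le : 2 ^ i ≤ N := by
      have : 2 ^ i ≤ 2 ^ (m - 1) := Nat.pow_le_pow_right (by norm_num) hi2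
      omega
    exact key_not_dvd q k i hq2 (by omega) hi1 (hN ▸ hpow_le) (hN ▸ hdvd)
end

section
/- Work on the circle 𝕋 = ℝ/ℤ with Lebesgue (Haar) measure λ and open balls B(z,r), and let T(x) = 2x mod 1. Let z_0, z_1, z_2, z_3 ∈ 𝕋 be pairwise distinct points with T(z_1) = T(z_2) = z_0, T(z_0) = z_3, and T(z_3) ∉ {z_0, z_1, z_2, z_3}. Then lim_{r→0⁺} [ Σ_{i=0}^{3} Σ_{j=0}^{3} (1/16)·λ( B(z_j, r) ∩ T^{-1}(B(z_i, r)) ) ] / [ Σ_{i=0}^{3} (1/4)·λ(B(z_i, r)) ] = 3/32. (This is the coefficient q_0 of the moving-target process in which the center of the target ball is chosen uniformly among z_0, z_1, z_2, z_3 at each step; hence the extremal index is strictly less than 1.) -/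
open MeasureTheory Set Filter Metric
open scoped ENNReal


private lemma norm_double {w : UnitAddCircle} (h : ‖w‖ ≤ 1/4) : ‖w + w‖ = 2 * ‖w‖ := by
  induction w using QuotientAddGroup.induction_on with
  | H x =>
    set t : ℝ := x - round x with ht
    have hz : ((round x : ℝ) : UnitAddCircle) = 0 := by
      rw [AddCircle.coe_eq_zero_iff]
      exact ⟨round x, by simp⟩
    have hcoe : ((t : ℝ) : UnitAddCircle) = (x : UnitAddCircle) := by
      rw [ht, AddCircle.coe_sub, hz, sub_zero]
    have hnorm : ‖(x : UnitAddCircle)‖ = |t| := UnitAddCircle.norm_eq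
    have h4 : |t| ≤ 1/4 := hnorm ▸ h
    have hdbl : ((x : UnitAddCircle)) + x = ((t + t : ℝ) : UnitAddCircle) := by
      rw [AddCircle.coe_add, hcoe]
    have habs : ‖((t + t : ℝ) : UnitAddCircle)‖ = |t + t| := by
      rw [AddCircle.norm_coe_eq_abs_iff (p := (1:ℝ)) one_ne_zero, abs_one]
      calc |t + t| ≤ |t| + |t| := abs_add_le _ _
        _ ≤ 1/2 := by linarith
    rw [hdbl, hnorm, habs, ← two_mul, abs_mul, abs_two]

private lemma inter_eq {z : UnitAddCircle} {r : ℝ} (hr4 : r ≤ 1/4) :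
    ball z r ∩ (fun x => x + x) ⁻¹' ball (z + z) r = ball z (r/2) := by
  ext x
  simp only [mem_inter_iff, mem_ball, mem_preimage, dist_eq_norm]
  have hxz : x + x - (z + z) = (x - z) + (x - z) := by abel
  constructor
  · rintro ⟨hx1, hx2⟩
    rw [hxz, norm_double (by linarith [hx1] : ‖x - z‖ ≤ 1/4)] at hx2
    linarith
  · intro hx
    have hnn := norm_nonneg (x - z)
    refine ⟨by linarith, ?_⟩
    rw [hxz]
    calc ‖(x - z) + (x - z)‖ ≤ ‖x - z‖ + ‖x - z‖ := norm_add_le _ _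
      _ < r := by linarith

private lemma inter_empty {z w : UnitAddCircle} {r : ℝ} (h : 3 * r ≤ dist (z + z) w) :
    ball z r ∩ (fun x : UnitAddCircle => x + x) ⁻¹' ball w r = ∅ := by
  rw [eq_empty_iff_forall_notMem]
  rintro x ⟨hx1, hx2⟩
  simp only [mem_ball, mem_preimage, dist_eq_norm] at hx1 hx2
  have hle : ‖(z + z) - (x + x)‖ ≤ 2 * ‖z - x‖ := by
    have : (z + z) - (x + x) = (z - x) + (z - x) := by abel
    rw [this]
    calc ‖(z - x) + (z - x)‖ ≤ ‖z - x‖ + ‖z - x‖ := norm_add_le _ _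
      _ = 2 * ‖z - x‖ := by ring
  have hzx : ‖z - x‖ = ‖x - z‖ := by rw [norm_sub_rev]
  have htri := dist_triangle (z + z) (x + x) w
  simp only [dist_eq_norm] at htri h
  linarith [hzx ▸ hle]

private lemma vol_ball (x : UnitAddCircle) {r : ℝ} (hr : r ≤ 1/2) :
    volume (ball x r) = ENNReal.ofReal (2 * r) := by
  rw [← measure_congr AddCircle.closedBall_ae_eq_ball, AddCircle.volume_closedBall]
  congr 1
  rw [min_eq_right (by linarith)]

/-- Moving target with discrete noise: `T(x) = 2x mod 1` on the circle, and the center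
of the target ball is chosen uniformly among four pairwise distinct points
`z₀, z₁, z₂, z₃` with `T z₁ = T z₂ = z₀`, `T z₀ = z₃`, `T z₃ ∉ {z₀, z₁, z₂, z₃}`.
Then the cluster coefficient
`q₀ = lim_{r→0⁺} [Σ_{i,j} (1/16) λ(B(z_j,r) ∩ T⁻¹ B(z_i,r))] / [Σ_i (1/4) λ(B(z_i,r))]`
equals `3/32`. -/
theorem stmt9 (T : UnitAddCircle → UnitAddCircle) (hT : ∀ x, T x = x + x)
    (z : Fin 4 → UnitAddCircle) (hinj : Function.Injective z)
    (h1 : T (z 1) = z 0) (h2 : T (z 2) = z 0) (h0 : T (z 0) = z 3)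
    (h3 : T (z 3) ∉ Set.range z) :
    Tendsto (fun r : ℝ =>
      (∑ i : Fin 4, ∑ j : Fin 4,
        (16⁻¹ : ℝ≥0∞) * volume (ball (z j) r ∩ T ⁻¹' ball (z i) r))
        / ∑ i : Fin 4, (4⁻¹ : ℝ≥0∞) * volume (ball (z i) r))
      (nhdsWithin 0 (Set.Ioi 0)) (nhds (3/32 : ℝ≥0∞)) := by
  have hTf : T = fun x => x + x := funext hT
  have hzne : ∀ a b : Fin 4, a ≠ b → z a ≠ z b := fun a b hab hzab => hab (hinj hzab)
  have h3' : ∀ i : Fin 4, T (z 3) ≠ z i := fun i hi => h3 ⟨i, hi.symm⟩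
  have key : ∀ i j : Fin 4, ∀ᶠ r in nhdsWithin (0:ℝ) (Set.Ioi 0),
      volume (ball (z j) r ∩ T ⁻¹' ball (z i) r)
        = if T (z j) = z i then ENNReal.ofReal r else 0 := by
    intro i j
    by_cases hij : T (z j) = z i
    · filter_upwards [Ioo_mem_nhdsGT_of_mem
        (by constructor <;> norm_num : (0:ℝ) ∈ Ico (0:ℝ) (1/4))] with r hr
      rw [if_pos hij, ← hij, hT (z j), hTf]
      rw [inter_eq hr.2.le, vol_ball _ (by linarith [hr.2] : r/2 ≤ 1/2)]
      congr 1; ring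
    · have hd : (0:ℝ) < dist (T (z j)) (z i) := dist_pos.2 hij
      filter_upwards [Ioo_mem_nhdsGT_of_mem
        (by constructor <;> [norm_num; positivity] :
          (0:ℝ) ∈ Ico (0:ℝ) (dist (T (z j)) (z i) / 3))] with r hr
      rw [if_neg hij, hTf]
      rw [inter_empty (by rw [← hT (z j)]; nlinarith [hr.2] : 3 * r ≤ dist (z j + z j) (z i)),
        measure_empty]
  have keyall : ∀ᶠ r in nhdsWithin (0:ℝ) (Set.Ioi 0), ∀ i j : Fin 4,
      volume (ball (z j) r ∩ T ⁻¹' ball (z i) r)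
        = if T (z j) = z i then ENNReal.ofReal r else 0 := by
    rw [eventually_all]; intro i; rw [eventually_all]; exact key i
  have vol4 : ∀ᶠ r in nhdsWithin (0:ℝ) (Set.Ioi 0), ∀ i : Fin 4,
      volume (ball (z i) r) = ENNReal.ofReal (2 * r) := by
    filter_upwards [Ioo_mem_nhdsGT_of_mem
      (by constructor <;> norm_num : (0:ℝ) ∈ Ico (0:ℝ) (1/2))] with r hr i
    exact vol_ball _ hr.2.le
  refine Tendsto.congr' ?_ tendsto_const_nhds
  filter_upwards [keyall, vol4, self_mem_nhdsWithin] with r hkey hvol hr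
  have hrpos : (0:ℝ) < r := hr
  symm
  simp only [Fin.sum_univ_four]
  rw [hkey 0 0, hkey 0 1, hkey 0 2, hkey 0 3, hkey 1 0, hkey 1 1, hkey 1 2, hkey 1 3,
    hkey 2 0, hkey 2 1, hkey 2 2, hkey 2 3, hkey 3 0, hkey 3 1, hkey 3 2, hkey 3 3,
    hvol 0, hvol 1, hvol 2, hvol 3]
  rw [if_pos h1, if_pos h2, if_pos h0,
    if_neg (fun h => hzne 3 0 (by decide) (h0.symm.trans h)),
    if_neg (h3' 0),
    if_neg (fun h => hzne 3 1 (by decide) (h0.symm.trans h)),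
    if_neg (fun h => hzne 0 1 (by decide) (h1.symm.trans h)),
    if_neg (fun h => hzne 0 1 (by decide) (h2.symm.trans h)),
    if_neg (h3' 1),
    if_neg (fun h => hzne 3 2 (by decide) (h0.symm.trans h)),
    if_neg (fun h => hzne 0 2 (by decide) (h1.symm.trans h)),
    if_neg (fun h => hzne 0 2 (by decide) (h2.symm.trans h)),
    if_neg (h3' 2),
    if_neg (fun h => hzne 0 3 (by decide) (h1.symm.trans h)),
    if_neg (fun h => hzne 0 3 (by decide) (h2.symm.trans h)),
    if_neg (h3' 3)]
  simp only [mul_zero, add_zero, zero_add]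
  set X := ENNReal.ofReal r with hX
  have hX0 : X ≠ 0 := by simp [hX, hrpos]
  have hXt : X ≠ ⊤ := ENNReal.ofReal_ne_top
  have hY : ENNReal.ofReal (2 * r) = 2 * X := by
    rw [hX, ENNReal.ofReal_mul (by norm_num)]; norm_num
  rw [hY]
  rw [show (16⁻¹ : ℝ≥0∞) * X + 16⁻¹ * X + 16⁻¹ * X = (3/16) * X by
      rw [← add_mul, ← add_mul]; congr 1; rw [ENNReal.div_eq_inv_mul]; ring,
    show (4⁻¹ : ℝ≥0∞) * (2*X) + 4⁻¹ * (2*X) + 4⁻¹ * (2*X) + 4⁻¹ * (2*X) = 2 * X by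
      rw [← add_mul, ← add_mul, ← add_mul, show (4⁻¹+4⁻¹+4⁻¹+4⁻¹ : ℝ≥0∞) = 1 by
        rw [show (4⁻¹+4⁻¹+4⁻¹+4⁻¹ : ℝ≥0∞) = 4 * 4⁻¹ by ring,
          ENNReal.mul_inv_cancel (by norm_num) (by norm_num)], one_mul]]
  rw [ENNReal.mul_div_mul_right _ _ hX0 hXt, div_eq_mul_inv, div_eq_mul_inv, div_eq_mul_inv,
    mul_assoc, show ((16:ℝ≥0∞)⁻¹ * 2⁻¹) = 32⁻¹ by
      rw [← ENNReal.mul_inv (by norm_num) (by norm_num)]; norm_num]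
end

section
/- Work on the circle 𝕋 = ℝ/ℤ with quotient metric d, and let b ∈ (0,1) be a real number. Let f_0(x) = 3x mod 1 and f_1(x) = 3x + b mod 1. Fix k ≥ 2, let Δ_r^k = {(x_1,…,x_k) ∈ 𝕋^k : max_{i=2,…,k} d(x_1, x_i) < r}, and for ξ = (ξ_1,…,ξ_k) ∈ {0,1}^k let f_ξ = f_{ξ_1} × ⋯ × f_{ξ_k} be the product map acting coordinatewise. If ξ is not constant (i.e., ξ_i ≠ ξ_j for some i, j) and 0 < r < min(b, 1−b)/4, then Δ_r^k ∩ f_ξ^{-1}(Δ_r^k) = ∅. -/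
open MeasureTheory Set Metric
open scoped ENNReal

/-- For the maps `f₀(x) = 3x mod 1` and `f₁(x) = 3x + b mod 1` on the circle, a
non-constant word `ξ ∈ {0,1}^k` and `0 < r < min(b, 1−b)/4`, the `r`-neighborhood
`Δ_r^k` of the diagonal in `𝕋^k` satisfies `Δ_r^k ∩ f_ξ⁻¹(Δ_r^k) = ∅`, where `f_ξ`
acts coordinatewise by `f_{ξ_i}`. -/
theorem stmt13 (b : ℝ) (hb : b ∈ Set.Ioo (0:ℝ) 1)
    (f : Bool → UnitAddCircle → UnitAddCircle)
    (hf₀ : ∀ x, f false x = x + x + x)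
    (hf₁ : ∀ x, f true x = x + x + x + (b : UnitAddCircle))
    (k : ℕ) (hk : 2 ≤ k) (ξ : Fin k → Bool) (hξ : ∃ i j, ξ i ≠ ξ j)
    (r : ℝ) (hr : 0 < r) (hr' : r < min b (1 - b) / 4)
    (Δ : Set (Fin k → UnitAddCircle))
    (hΔ : Δ = {x | ∀ i : Fin k, i ≠ ⟨0, by omega⟩ → dist (x ⟨0, by omega⟩) (x i) < r}) :
    Δ ∩ (fun x i => f (ξ i) (x i)) ⁻¹' Δ = ∅ := by
  subst hΔ
  ext x
  simp only [Set.mem_inter_iff, Set.mem_preimage, Set.mem_setOf_eq,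
    Set.mem_empty_iff_false, iff_false, not_and]
  intro h1 h2
  set z : Fin k := ⟨0, by omega⟩ with hz
  obtain ⟨i, j, hij⟩ := hξ
  obtain ⟨m, hm⟩ : ∃ m, ξ m ≠ ξ z := by
    by_cases hi : ξ i = ξ z
    · exact ⟨j, fun h => hij (hi.trans h.symm)⟩
    · exact ⟨i, hi⟩
  have hmz : m ≠ z := fun h => hm (by rw [h])
  have hd : dist (x z) (x m) < r := h1 m hmz
  have hd' : dist (f (ξ z) (x z)) (f (ξ m) (x m)) < r := h2 m hmz
  have key : dist (x z + x z + x z) (x m + x m + x m) ≤ 3 * r := by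
    calc dist (x z + x z + x z) (x m + x m + x m)
        ≤ dist (x z + x z) (x m + x m) + dist (x z) (x m) := dist_add_add_le _ _ _ _
      _ ≤ (dist (x z) (x m) + dist (x z) (x m)) + dist (x z) (x m) := by
          gcongr
          exact dist_add_add_le _ _ _ _
      _ ≤ 3 * r := by linarith
  have hbnorm : min b (1 - b) ≤ ‖((b : ℝ) : UnitAddCircle)‖ := by
    rw [UnitAddCircle.norm_eq]
    obtain ⟨hb0, hb1⟩ := hb
    rcases le_or_gt (round b) 0 with h | h
    · have : (round b : ℝ) ≤ 0 := by exact_mod_cast h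
      have : b ≤ |b - round b| := by rw [abs_sub_comm]; rw [abs_of_nonpos (by linarith)]; linarith
      exact le_trans (min_le_left _ _) this
    · have : (1 : ℝ) ≤ (round b : ℝ) := by exact_mod_cast h
      have : 1 - b ≤ |b - round b| := by rw [abs_of_nonpos (by linarith)]; linarith
      exact le_trans (min_le_right _ _) this
  have hbig : min b (1 - b) - 3 * r ≤ dist (f (ξ z) (x z)) (f (ξ m) (x m)) := by
    have hcase : dist (f (ξ z) (x z)) (f (ξ m) (x m)) =
        dist (x z + x z + x z) (x m + x m + x m + (b : UnitAddCircle)) ∨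
        dist (f (ξ z) (x z)) (f (ξ m) (x m)) =
        dist (x z + x z + x z + (b : UnitAddCircle)) (x m + x m + x m) := by
      cases hz0 : ξ z <;> cases hm0 : ξ m
      · exact absurd (hm0.trans hz0.symm) hm
      · left; rw [hf₀, hf₁]
      · right; rw [hf₀, hf₁]
      · exact absurd (hm0.trans hz0.symm) hm
    have hnb : ‖((b : ℝ) : UnitAddCircle)‖ = dist (x m + x m + x m)
        (x m + x m + x m + (b : UnitAddCircle)) := by
      rw [dist_eq_norm]; simp
    have hnb' : ‖((b : ℝ) : UnitAddCircle)‖ = dist (x z + x z + x z)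
        (x z + x z + x z + (b : UnitAddCircle)) := by
      rw [dist_eq_norm]; simp
    rcases hcase with h | h
    · rw [h]
      have := dist_triangle (x m + x m + x m) (x z + x z + x z)
        (x m + x m + x m + (b : UnitAddCircle))
      rw [dist_comm (x m + x m + x m) (x z + x z + x z)] at this
      linarith [hnb ▸ hbnorm]
    · rw [h]
      have := dist_triangle (x z + x z + x z) (x m + x m + x m)
        (x z + x z + x z + (b : UnitAddCircle))
      rw [dist_comm (x z + x z + x z + (b : UnitAddCircle)) (x m + x m + x m)] at *
      linarith [hnb' ▸ hbnorm]
  linarith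
end

section
/- Let T : [0,1) → [0,1) be the piecewise linear Markov map T(x) = 3x for x ∈ [0,1/3), T(x) = 5/3 − 2x for x ∈ [1/3,2/3), T(x) = 3x − 2 for x ∈ [2/3,1), let h = 3/5 on [0,1/3) and h = 6/5 on [1/3,1), and let μ = h·Leb be the associated T-invariant probability measure. Then lim_{r→0⁺} (μ ⊗ μ)( {(x,y) ∈ [0,1)² : |x−y| < r and |T(x) − T(y)| < r} ) / (μ ⊗ μ)( {(x,y) ∈ [0,1)² : |x−y| < r} ) = 11/27. (Hence the dynamical extremal index of T for k = 2 is θ_2 = 1 − 11/27 = 16/27 ≈ 0.5926, in agreement with the formula θ_2 = 1 − (∫ h²/|DT|)/(∫ h²).) -/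
open MeasureTheory Set Filter
open scoped ENNReal

lemma my_smul_prod (c : ℝ≥0∞) (μ ν : Measure ℝ) [SFinite μ] [SFinite ν] :
    (c • μ).prod ν = c • μ.prod ν := by
  refine Measure.ext fun s hs => ?_
  rw [Measure.smul_apply, Measure.prod_apply hs, Measure.prod_apply hs,
    lintegral_smul_measure, smul_eq_mul]

lemma my_prod_smul (c : ℝ≥0∞) (μ ν : Measure ℝ) [SFinite μ] [SFinite ν] :
    μ.prod (c • ν) = c • μ.prod ν := by
  refine Measure.ext fun s hs => ?_
  rw [Measure.smul_apply, Measure.prod_apply hs, Measure.prod_apply hs, smul_eq_mul,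
    ← lintegral_const_mul _ (measurable_measure_prodMk_left hs)]
  simp

lemma strip_meas (s t w : ℝ) :
    MeasurableSet {p : ℝ × ℝ | p.1 ∈ Ico s t ∧ p.2 ∈ Ico s t ∧ |p.1 - p.2| < w} := by
  apply MeasurableSet.inter
  · exact (measurableSet_Ico.preimage measurable_fst)
  apply MeasurableSet.inter
  · exact (measurableSet_Ico.preimage measurable_snd)
  · exact measurableSet_lt ((measurable_fst.sub measurable_snd).abs) measurable_const

lemma strip_area (s t w : ℝ) (hw : 0 < w) (h2 : 2*w ≤ t - s) :
    (volume.prod volume) {p : ℝ × ℝ | p.1 ∈ Ico s t ∧ p.2 ∈ Ico s t ∧ |p.1 - p.2| < w}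
      = ENNReal.ofReal (2*w*(t-s) - w^2) := by
  have hst : s ≤ t := by linarith
  rw [Measure.prod_apply (strip_meas s t w)]
  have hsec : ∀ x : ℝ, volume (Prod.mk x ⁻¹' {p : ℝ × ℝ | p.1 ∈ Ico s t ∧ p.2 ∈ Ico s t ∧ |p.1 - p.2| < w})
      = (Ico s t).indicator (fun x => ENNReal.ofReal (min t (x+w) - max s (x-w))) x := by
    intro x
    by_cases hx : x ∈ Ico s t
    · rw [indicator_of_mem hx]
      have hkey : Ioo (max s (x-w)) (min t (x+w)) ⊆
          Prod.mk x ⁻¹' {p : ℝ × ℝ | p.1 ∈ Ico s t ∧ p.2 ∈ Ico s t ∧ |p.1 - p.2| < w} ∧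
          Prod.mk x ⁻¹' {p : ℝ × ℝ | p.1 ∈ Ico s t ∧ p.2 ∈ Ico s t ∧ |p.1 - p.2| < w} ⊆
          Ico (max s (x-w)) (min t (x+w)) := by
        constructor
        · intro y hy
          simp only [mem_Ioo, max_lt_iff, lt_min_iff] at hy
          refine ⟨hx, ⟨by constructor <;> linarith [hy.1.1, hy.1.2, hy.2.1, hy.2.2], ?_⟩⟩
          rw [abs_sub_lt_iff]; constructor <;> linarith [hy.1.2, hy.2.2]
        · intro y hy
          simp only [mem_preimage, mem_setOf_eq, mem_Ico, abs_sub_lt_iff] at hy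
          simp only [mem_Ico, max_le_iff, lt_min_iff]
          exact ⟨⟨hy.2.1.1, by linarith [hy.2.2.2]⟩, ⟨hy.2.1.2, by linarith [hy.2.2.1]⟩⟩
      refine le_antisymm ?_ ?_
      · calc _ ≤ volume (Ico (max s (x-w)) (min t (x+w))) := measure_mono hkey.2
          _ = _ := by rw [Real.volume_Ico]
      · calc ENNReal.ofReal (min t (x+w) - max s (x-w)) = volume (Ioo (max s (x-w)) (min t (x+w))) := by
              rw [Real.volume_Ioo]
          _ ≤ _ := measure_mono hkey.1
    · rw [indicator_of_notMem hx]
      have he : Prod.mk x ⁻¹' {p : ℝ × ℝ | p.1 ∈ Ico s t ∧ p.2 ∈ Ico s t ∧ |p.1 - p.2| < w} = ∅ := by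
        ext y
        simp only [mem_preimage, mem_setOf_eq, mem_empty_iff_false, iff_false]
        exact fun hc => hx hc.1
      rw [he, measure_empty]
  simp_rw [hsec]
  rw [lintegral_indicator measurableSet_Ico]
  have hcont : Continuous (fun x : ℝ => min t (x+w) - max s (x-w)) := by
    apply Continuous.sub
    · exact continuous_const.min (continuous_id.add continuous_const)
    · exact continuous_const.max (continuous_id.sub continuous_const)
  rw [← ofReal_integral_eq_lintegral_ofReal (hcont.integrableOn_Icc.mono_set Ico_subset_Icc_self)]
  · congr 1
    rw [MeasureTheory.integral_Ico_eq_integral_Ioo, ← MeasureTheory.integral_Ioc_eq_integral_Ioo, ← intervalIntegral.integral_of_le hst]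
    have h1 : s ≤ s + w := by linarith
    have h2' : s + w ≤ t - w := by linarith
    have h3 : t - w ≤ t := by linarith
    have i1 : IntervalIntegrable (fun x : ℝ => min t (x+w) - max s (x-w)) volume s (s+w) :=
      hcont.intervalIntegrable _ _
    have i2 : IntervalIntegrable (fun x : ℝ => min t (x+w) - max s (x-w)) volume (s+w) (t-w) :=
      hcont.intervalIntegrable _ _
    have i3 : IntervalIntegrable (fun x : ℝ => min t (x+w) - max s (x-w)) volume (t-w) t :=
      hcont.intervalIntegrable _ _
    rw [← intervalIntegral.integral_add_adjacent_intervals (i1.trans i2) i3,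
        ← intervalIntegral.integral_add_adjacent_intervals i1 i2]
    have e1 : ∫ x in s..(s+w), (min t (x+w) - max s (x-w)) = ∫ x in s..(s+w), (x + (w - s)) := by
      apply intervalIntegral.integral_congr
      intro x hx
      rw [uIcc_of_le h1] at hx
      have := hx.1; have := hx.2
      dsimp only
      rw [min_eq_right (by linarith), max_eq_left (by linarith)]
      ring
    have e2 : ∫ x in (s+w)..(t-w), (min t (x+w) - max s (x-w)) = ∫ x in (s+w)..(t-w), (2*w) := by
      apply intervalIntegral.integral_congr
      intro x hx
      rw [uIcc_of_le h2'] at hx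
      have := hx.1; have := hx.2
      dsimp only
      rw [min_eq_right (by linarith), max_eq_right (by linarith)]
      ring
    have e3 : ∫ x in (t-w)..t, (min t (x+w) - max s (x-w)) = ∫ x in (t-w)..t, ((t + w) - x) := by
      apply intervalIntegral.integral_congr
      intro x hx
      rw [uIcc_of_le h3] at hx
      have := hx.1; have := hx.2
      dsimp only
      rw [min_eq_left (by linarith), max_eq_right (by linarith)]
      ring
    rw [e1, e2, e3]
    rw [intervalIntegral.integral_add intervalIntegral.intervalIntegrable_id intervalIntegrable_const,
        intervalIntegral.integral_sub intervalIntegrable_const intervalIntegral.intervalIntegrable_id,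
        integral_id, integral_id,
        intervalIntegral.integral_const, intervalIntegral.integral_const, intervalIntegral.integral_const]
    simp only [smul_eq_mul]
    ring
  · filter_upwards [ae_restrict_mem measurableSet_Ico] with x hx
    simp only [Pi.zero_apply]
    have hx1 := hx.1; have hx2 := hx.2
    have : max s (x-w) ≤ x := by
      apply max_le <;> linarith
    have : x ≤ min t (x+w) := by
      apply le_min <;> linarith
    linarith

lemma mu_decomp (h : ℝ → ℝ) (hh : ∀ x, h x = if x < 1/3 then 3/5 else 6/5)
    (μ : Measure ℝ)
    (hμ : μ = (volume.restrict (Set.Ico (0:ℝ) 1)).withDensity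
      fun x => ENNReal.ofReal (h x)) :
    μ = ENNReal.ofReal (3/5) • volume.restrict (Ico (0:ℝ) (1/3))
      + ENNReal.ofReal (6/5) • volume.restrict (Ico (1/3:ℝ) (2/3))
      + ENNReal.ofReal (6/5) • volume.restrict (Ico (2/3:ℝ) 1) := by
  refine Measure.ext fun s hs => ?_
  rw [hμ, withDensity_apply _ hs, Measure.restrict_restrict hs]
  have hsplit : s ∩ Ico (0:ℝ) 1 = (s ∩ Ico (0:ℝ) (1/3)) ∪ ((s ∩ Ico (1/3:ℝ) (2/3)) ∪ (s ∩ Ico (2/3:ℝ) 1)) := by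
    rw [← inter_union_distrib_left, ← inter_union_distrib_left]
    congr 1
    rw [Ico_union_Ico_eq_Ico (by norm_num) (by norm_num),
      Ico_union_Ico_eq_Ico (by norm_num) (by norm_num)]
  have m1 : MeasurableSet (s ∩ Ico (0:ℝ) (1/3)) := hs.inter measurableSet_Ico
  have m2 : MeasurableSet (s ∩ Ico (1/3:ℝ) (2/3)) := hs.inter measurableSet_Ico
  have m3 : MeasurableSet (s ∩ Ico (2/3:ℝ) 1) := hs.inter measurableSet_Ico
  have d23 : Disjoint (s ∩ Ico (1/3:ℝ) (2/3)) (s ∩ Ico (2/3:ℝ) 1) :=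
    ((Set.Ico_disjoint_Ico_same).mono inter_subset_right inter_subset_right)
  have d123 : Disjoint (s ∩ Ico (0:ℝ) (1/3)) ((s ∩ Ico (1/3:ℝ) (2/3)) ∪ (s ∩ Ico (2/3:ℝ) 1)) := by
    refine Disjoint.union_right ?_ ?_
    · exact (Set.Ico_disjoint_Ico_same).mono inter_subset_right inter_subset_right
    · refine Disjoint.mono inter_subset_right inter_subset_right ?_
      refine Set.disjoint_left.mpr fun x hx1 hx2 => ?_
      have := hx1.2; have := hx2.1; linarith
  rw [hsplit, lintegral_union (m2.union m3) d123, lintegral_union m3 d23]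
  have c1 : ∫⁻ x in s ∩ Ico (0:ℝ) (1/3), ENNReal.ofReal (h x) ∂volume
      = ENNReal.ofReal (3/5) * volume (s ∩ Ico (0:ℝ) (1/3)) := by
    rw [setLIntegral_congr_fun m1 (fun x hx => ?_), setLIntegral_const]
    rw [hh x, if_pos hx.2.2]
  have c2 : ∫⁻ x in s ∩ Ico (1/3:ℝ) (2/3), ENNReal.ofReal (h x) ∂volume
      = ENNReal.ofReal (6/5) * volume (s ∩ Ico (1/3:ℝ) (2/3)) := by
    rw [setLIntegral_congr_fun m2 (fun x hx => ?_), setLIntegral_const]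
    rw [hh x, if_neg (by have := hx.2.1; intro hc; linarith)]
  have c3 : ∫⁻ x in s ∩ Ico (2/3:ℝ) 1, ENNReal.ofReal (h x) ∂volume
      = ENNReal.ofReal (6/5) * volume (s ∩ Ico (2/3:ℝ) 1) := by
    rw [setLIntegral_congr_fun m3 (fun x hx => ?_), setLIntegral_const]
    rw [hh x, if_neg (by have := hx.2.1; intro hc; linarith)]
  rw [c1, c2, c3]
  simp only [Measure.add_apply, Measure.smul_apply, smul_eq_mul,
    Measure.restrict_apply hs]
  ring

noncomputable def c1 : ℝ≥0∞ := ENNReal.ofReal (3/5)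
noncomputable def c2 : ℝ≥0∞ := ENNReal.ofReal (6/5)
def I1 : Set ℝ := Ico (0:ℝ) (1/3)
def I2 : Set ℝ := Ico (1/3:ℝ) (2/3)
def I3 : Set ℝ := Ico (2/3:ℝ) 1

lemma prod_apply_decomp (h : ℝ → ℝ) (hh : ∀ x, h x = if x < 1/3 then 3/5 else 6/5)
    (μ : Measure ℝ)
    (hμ : μ = (volume.restrict (Set.Ico (0:ℝ) 1)).withDensity
      fun x => ENNReal.ofReal (h x))
    (S : Set (ℝ × ℝ)) (hS : MeasurableSet S) :
    (μ.prod μ) S =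
      c1 * c1 * (volume.prod volume) (S ∩ I1 ×ˢ I1)
    + c1 * c2 * (volume.prod volume) (S ∩ I1 ×ˢ I2)
    + c1 * c2 * (volume.prod volume) (S ∩ I1 ×ˢ I3)
    + c2 * c1 * (volume.prod volume) (S ∩ I2 ×ˢ I1)
    + c2 * c2 * (volume.prod volume) (S ∩ I2 ×ˢ I2)
    + c2 * c2 * (volume.prod volume) (S ∩ I2 ×ˢ I3)
    + c2 * c1 * (volume.prod volume) (S ∩ I3 ×ˢ I1)
    + c2 * c2 * (volume.prod volume) (S ∩ I3 ×ˢ I2)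
    + c2 * c2 * (volume.prod volume) (S ∩ I3 ×ˢ I3) := by
  rw [mu_decomp h hh μ hμ]
  simp only [Measure.add_prod, Measure.prod_add, my_smul_prod, my_prod_smul,
    Measure.prod_restrict, smul_smul, Measure.add_apply, Measure.smul_apply,
    Measure.restrict_apply hS, smul_eq_mul, c1, c2, I1, I2, I3]
  ring

def SD (r : ℝ) : Set (ℝ × ℝ) :=
  {x : ℝ × ℝ | x.1 ∈ Set.Ico (0:ℝ) 1 ∧ x.2 ∈ Set.Ico (0:ℝ) 1 ∧ |x.1 - x.2| < r}

def SN (T : ℝ → ℝ) (r : ℝ) : Set (ℝ × ℝ) :=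
  {x : ℝ × ℝ | x.1 ∈ Set.Ico (0:ℝ) 1 ∧ x.2 ∈ Set.Ico (0:ℝ) 1 ∧ |x.1 - x.2| < r ∧
    |T x.1 - T x.2| < r}

lemma SN_subset_SD (T : ℝ → ℝ) (r : ℝ) : SN T r ⊆ SD r :=
  fun p hp => ⟨hp.1, hp.2.1, hp.2.2.1⟩

lemma SD_diag1 (r : ℝ) : SD r ∩ I1 ×ˢ I1
    = {p : ℝ × ℝ | p.1 ∈ Ico (0:ℝ) (1/3) ∧ p.2 ∈ Ico (0:ℝ) (1/3) ∧ |p.1 - p.2| < r} := by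
  ext p
  simp only [SD, I1, mem_inter_iff, mem_setOf_eq, mem_prod, mem_Ico]
  constructor
  · rintro ⟨⟨h1, h2, h3⟩, h4, h5⟩
    exact ⟨h4, h5, h3⟩
  · rintro ⟨h1, h2, h3⟩
    refine ⟨⟨⟨h1.1, by linarith [h1.2]⟩, ⟨h2.1, by linarith [h2.2]⟩, h3⟩, h1, h2⟩

lemma SD_diag2 (r : ℝ) : SD r ∩ I2 ×ˢ I2
    = {p : ℝ × ℝ | p.1 ∈ Ico (1/3:ℝ) (2/3) ∧ p.2 ∈ Ico (1/3:ℝ) (2/3) ∧ |p.1 - p.2| < r} := by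
  ext p
  simp only [SD, I2, mem_inter_iff, mem_setOf_eq, mem_prod, mem_Ico]
  constructor
  · rintro ⟨⟨h1, h2, h3⟩, h4, h5⟩
    exact ⟨h4, h5, h3⟩
  · rintro ⟨h1, h2, h3⟩
    refine ⟨⟨⟨by linarith [h1.1], by linarith [h1.2]⟩, ⟨by linarith [h2.1], by linarith [h2.2]⟩, h3⟩, h1, h2⟩

lemma SD_diag3 (r : ℝ) : SD r ∩ I3 ×ˢ I3
    = {p : ℝ × ℝ | p.1 ∈ Ico (2/3:ℝ) 1 ∧ p.2 ∈ Ico (2/3:ℝ) 1 ∧ |p.1 - p.2| < r} := by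
  ext p
  simp only [SD, I3, mem_inter_iff, mem_setOf_eq, mem_prod, mem_Ico]
  constructor
  · rintro ⟨⟨h1, h2, h3⟩, h4, h5⟩
    exact ⟨h4, h5, h3⟩
  · rintro ⟨h1, h2, h3⟩
    refine ⟨⟨⟨by linarith [h1.1], h1.2⟩, ⟨by linarith [h2.1], h2.2⟩, h3⟩, h1, h2⟩

lemma vol_rect_le (A : Set (ℝ × ℝ)) (a b c d : ℝ) (hA : A ⊆ Ico a b ×ˢ Ico c d) :
    (volume.prod volume) A ≤ ENNReal.ofReal (b - a) * ENNReal.ofReal (d - c) := by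
  calc (volume.prod volume) A ≤ (volume.prod volume) (Ico a b ×ˢ Ico c d) := measure_mono hA
    _ = _ := by rw [Measure.prod_prod, Real.volume_Ico, Real.volume_Ico]

lemma SD_cross12 (r : ℝ) : SD r ∩ I1 ×ˢ I2 ⊆ Ico (1/3 - r) (1/3) ×ˢ Ico (1/3:ℝ) (1/3 + r) := by
  rintro p ⟨⟨h1, h2, h3⟩, h4, h5⟩
  rw [abs_sub_lt_iff] at h3
  simp only [I1, I2, mem_Ico] at h4 h5
  exact ⟨⟨by linarith [h3.2, h5.1], h4.2⟩, ⟨h5.1, by linarith [h3.1, h4.2]⟩⟩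

lemma SD_cross21 (r : ℝ) : SD r ∩ I2 ×ˢ I1 ⊆ Ico (1/3:ℝ) (1/3 + r) ×ˢ Ico (1/3 - r) (1/3) := by
  rintro p ⟨⟨h1, h2, h3⟩, h4, h5⟩
  rw [abs_sub_lt_iff] at h3
  simp only [I1, I2, mem_Ico] at h4 h5
  exact ⟨⟨h4.1, by linarith [h3.1, h5.2]⟩, ⟨by linarith [h3.2, h4.1], h5.2⟩⟩

lemma SD_cross23 (r : ℝ) : SD r ∩ I2 ×ˢ I3 ⊆ Ico (2/3 - r) (2/3) ×ˢ Ico (2/3:ℝ) (2/3 + r) := by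
  rintro p ⟨⟨h1, h2, h3⟩, h4, h5⟩
  rw [abs_sub_lt_iff] at h3
  simp only [I2, I3, mem_Ico] at h4 h5
  exact ⟨⟨by linarith [h3.2, h5.1], h4.2⟩, ⟨h5.1, by linarith [h3.1, h4.2]⟩⟩

lemma SD_cross32 (r : ℝ) : SD r ∩ I3 ×ˢ I2 ⊆ Ico (2/3:ℝ) (2/3 + r) ×ˢ Ico (2/3 - r) (2/3) := by
  rintro p ⟨⟨h1, h2, h3⟩, h4, h5⟩
  rw [abs_sub_lt_iff] at h3
  simp only [I2, I3, mem_Ico] at h4 h5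
  exact ⟨⟨h4.1, by linarith [h3.1, h5.2]⟩, ⟨by linarith [h3.2, h4.1], h5.2⟩⟩

lemma SD_cross13 (r : ℝ) (hr : r ≤ 1/3) : SD r ∩ I1 ×ˢ I3 = ∅ := by
  ext p
  simp only [SD, I1, I3, mem_inter_iff, mem_setOf_eq, mem_prod, mem_Ico,
    mem_empty_iff_false, iff_false]
  rintro ⟨⟨h1, h2, h3⟩, h4, h5⟩
  rw [abs_sub_lt_iff] at h3
  linarith [h3.2, h4.2, h5.1]

lemma SD_cross31 (r : ℝ) (hr : r ≤ 1/3) : SD r ∩ I3 ×ˢ I1 = ∅ := by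
  ext p
  simp only [SD, I1, I3, mem_inter_iff, mem_setOf_eq, mem_prod, mem_Ico,
    mem_empty_iff_false, iff_false]
  rintro ⟨⟨h1, h2, h3⟩, h4, h5⟩
  rw [abs_sub_lt_iff] at h3
  linarith [h3.1, h4.1, h5.2]

lemma SN_diag1 (T : ℝ → ℝ)
    (hT : ∀ x, T x = if x < 1/3 then 3*x else if x < 2/3 then 5/3 - 2*x else 3*x - 2)
    (r : ℝ) (hr : 0 < r) : SN T r ∩ I1 ×ˢ I1
    = {p : ℝ × ℝ | p.1 ∈ Ico (0:ℝ) (1/3) ∧ p.2 ∈ Ico (0:ℝ) (1/3) ∧ |p.1 - p.2| < r/3} := by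
  ext p
  simp only [SN, I1, mem_inter_iff, mem_setOf_eq, mem_prod, mem_Ico]
  constructor
  · rintro ⟨⟨h1, h2, h3, h6⟩, h4, h5⟩
    rw [hT p.1, hT p.2, if_pos h4.2, if_pos h5.2, abs_sub_lt_iff] at h6
    rw [abs_sub_lt_iff]
    exact ⟨h4, h5, by constructor <;> linarith [h6.1, h6.2]⟩
  · rintro ⟨h1, h2, h3⟩
    rw [abs_sub_lt_iff] at h3
    refine ⟨⟨⟨h1.1, by linarith [h1.2]⟩, ⟨h2.1, by linarith [h2.2]⟩, ?_, ?_⟩, h1, h2⟩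
    · rw [abs_sub_lt_iff]; constructor <;> linarith [h3.1, h3.2]
    · rw [hT p.1, hT p.2, if_pos h1.2, if_pos h2.2, abs_sub_lt_iff]
      constructor <;> linarith [h3.1, h3.2]

lemma SN_diag2 (T : ℝ → ℝ)
    (hT : ∀ x, T x = if x < 1/3 then 3*x else if x < 2/3 then 5/3 - 2*x else 3*x - 2)
    (r : ℝ) (hr : 0 < r) : SN T r ∩ I2 ×ˢ I2
    = {p : ℝ × ℝ | p.1 ∈ Ico (1/3:ℝ) (2/3) ∧ p.2 ∈ Ico (1/3:ℝ) (2/3) ∧ |p.1 - p.2| < r/2} := by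
  ext p
  have hTx : ∀ x : ℝ, x ∈ Ico (1/3:ℝ) (2/3) → T x = 5/3 - 2*x := by
    intro x hx
    rw [hT x, if_neg (by push_neg; exact hx.1), if_pos hx.2]
  simp only [SN, I2, mem_inter_iff, mem_setOf_eq, mem_prod, mem_Ico]
  constructor
  · rintro ⟨⟨h1, h2, h3, h6⟩, h4, h5⟩
    rw [hTx p.1 h4, hTx p.2 h5, abs_sub_lt_iff] at h6
    rw [abs_sub_lt_iff]
    exact ⟨h4, h5, by constructor <;> linarith [h6.1, h6.2]⟩
  · rintro ⟨h1, h2, h3⟩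
    rw [abs_sub_lt_iff] at h3
    refine ⟨⟨⟨by linarith [h1.1], by linarith [h1.2]⟩,
      ⟨by linarith [h2.1], by linarith [h2.2]⟩, ?_, ?_⟩, h1, h2⟩
    · rw [abs_sub_lt_iff]; constructor <;> linarith [h3.1, h3.2]
    · rw [hTx p.1 h1, hTx p.2 h2, abs_sub_lt_iff]
      constructor <;> linarith [h3.1, h3.2]

lemma SN_diag3 (T : ℝ → ℝ)
    (hT : ∀ x, T x = if x < 1/3 then 3*x else if x < 2/3 then 5/3 - 2*x else 3*x - 2)
    (r : ℝ) (hr : 0 < r) : SN T r ∩ I3 ×ˢ I3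
    = {p : ℝ × ℝ | p.1 ∈ Ico (2/3:ℝ) 1 ∧ p.2 ∈ Ico (2/3:ℝ) 1 ∧ |p.1 - p.2| < r/3} := by
  ext p
  have hTx : ∀ x : ℝ, x ∈ Ico (2/3:ℝ) 1 → T x = 3*x - 2 := by
    intro x hx
    rw [hT x, if_neg (by push_neg; linarith [hx.1]), if_neg (by push_neg; exact hx.1)]
  simp only [SN, I3, mem_inter_iff, mem_setOf_eq, mem_prod, mem_Ico]
  constructor
  · rintro ⟨⟨h1, h2, h3, h6⟩, h4, h5⟩
    rw [hTx p.1 h4, hTx p.2 h5, abs_sub_lt_iff] at h6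
    rw [abs_sub_lt_iff]
    exact ⟨h4, h5, by constructor <;> linarith [h6.1, h6.2]⟩
  · rintro ⟨h1, h2, h3⟩
    rw [abs_sub_lt_iff] at h3
    refine ⟨⟨⟨by linarith [h1.1], h1.2⟩, ⟨by linarith [h2.1], h2.2⟩, ?_, ?_⟩, h1, h2⟩
    · rw [abs_sub_lt_iff]; constructor <;> linarith [h3.1, h3.2]
    · rw [hTx p.1 h1, hTx p.2 h2, abs_sub_lt_iff]
      constructor <;> linarith [h3.1, h3.2]

lemma coef_mul (a b x : ℝ) (ha : 0 ≤ a) (hb : 0 ≤ b) :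
    ENNReal.ofReal a * ENNReal.ofReal b * ENNReal.ofReal x = ENNReal.ofReal (a*b*x) := by
  rw [← ENNReal.ofReal_mul ha, ← ENNReal.ofReal_mul (mul_nonneg ha hb)]

lemma T_meas (T : ℝ → ℝ)
    (hT : ∀ x, T x = if x < 1/3 then 3*x else if x < 2/3 then 5/3 - 2*x else 3*x - 2) :
    Measurable T := by
  have hTe : T = fun x => if x < 1/3 then 3*x else if x < 2/3 then 5/3 - 2*x else 3*x - 2 :=
    funext hT
  rw [hTe]
  refine Measurable.ite (measurableSet_lt measurable_id measurable_const)
    (measurable_id.const_mul 3) ?_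
  refine Measurable.ite (measurableSet_lt measurable_id measurable_const)
    (measurable_const.sub (measurable_id.const_mul 2)) ?_
  exact (measurable_id.const_mul 3).sub measurable_const

lemma SD_meas (r : ℝ) : MeasurableSet (SD r) := strip_meas 0 1 r

lemma SN_meas (T : ℝ → ℝ)
    (hT : ∀ x, T x = if x < 1/3 then 3*x else if x < 2/3 then 5/3 - 2*x else 3*x - 2)
    (r : ℝ) : MeasurableSet (SN T r) := by
  have hTm := T_meas T hT
  apply MeasurableSet.inter
  · exact (measurableSet_Ico.preimage measurable_fst)
  apply MeasurableSet.inter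
  · exact (measurableSet_Ico.preimage measurable_snd)
  apply MeasurableSet.inter
  · exact measurableSet_lt ((measurable_fst.sub measurable_snd).abs) measurable_const
  · exact measurableSet_lt (((hTm.comp measurable_fst).sub (hTm.comp measurable_snd)).abs)
      measurable_const

lemma ofReal_add3 (x1 x2 x3 : ℝ) (h1 : 0 ≤ x1) (h2 : 0 ≤ x2) (h3 : 0 ≤ x3) :
    ENNReal.ofReal x1 + ENNReal.ofReal x2 + ENNReal.ofReal x3
      = ENNReal.ofReal (x1 + x2 + x3) := by
  rw [ENNReal.ofReal_add (by linarith) h3, ENNReal.ofReal_add h1 h2]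

lemma ofReal_add7 (x1 x2 x3 x4 x5 x6 x7 : ℝ) (h1 : 0 ≤ x1) (h2 : 0 ≤ x2) (h3 : 0 ≤ x3)
    (h4 : 0 ≤ x4) (h5 : 0 ≤ x5) (h6 : 0 ≤ x6) (h7 : 0 ≤ x7) :
    ENNReal.ofReal x1 + ENNReal.ofReal x2 + ENNReal.ofReal x3 + ENNReal.ofReal x4
      + ENNReal.ofReal x5 + ENNReal.ofReal x6 + ENNReal.ofReal x7
      = ENNReal.ofReal (x1 + x2 + x3 + x4 + x5 + x6 + x7) := by
  rw [ENNReal.ofReal_add (by linarith) h7, ENNReal.ofReal_add (by linarith) h6,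
    ENNReal.ofReal_add (by linarith) h5, ENNReal.ofReal_add (by linarith) h4,
    ENNReal.ofReal_add (by linarith) h3, ENNReal.ofReal_add h1 h2]

lemma cm1 (x : ℝ) : c1 * c1 * ENNReal.ofReal x = ENNReal.ofReal (9/25*x) := by
  simp only [c1]
  rw [coef_mul _ _ _ (by norm_num) (by norm_num)]
  norm_num

lemma cm2 (x : ℝ) : c2 * c2 * ENNReal.ofReal x = ENNReal.ofReal (36/25*x) := by
  simp only [c2]
  rw [coef_mul _ _ _ (by norm_num) (by norm_num)]
  norm_num

lemma cm12 (x : ℝ) : c1 * c2 * ENNReal.ofReal x = ENNReal.ofReal (18/25*x) := by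
  simp only [c1, c2]
  rw [coef_mul _ _ _ (by norm_num) (by norm_num)]
  norm_num

lemma cm21 (x : ℝ) : c2 * c1 * ENNReal.ofReal x = ENNReal.ofReal (18/25*x) := by
  simp only [c1, c2]
  rw [coef_mul _ _ _ (by norm_num) (by norm_num)]
  norm_num

lemma den_bounds (h : ℝ → ℝ) (hh : ∀ x, h x = if x < 1/3 then 3/5 else 6/5)
    (μ : Measure ℝ)
    (hμ : μ = (volume.restrict (Set.Ico (0:ℝ) 1)).withDensity
      fun x => ENNReal.ofReal (h x))
    (r : ℝ) (hr0 : 0 < r) (hr1 : r ≤ 1/10) :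
    ENNReal.ofReal (54/25*r - 81/25*r^2) ≤ (μ.prod μ) (SD r) ∧
    (μ.prod μ) (SD r) ≤ ENNReal.ofReal (54/25*r + 27/25*r^2) := by
  have hd := prod_apply_decomp h hh μ hμ (SD r) (SD_meas r)
  rw [SD_diag1, SD_diag2, SD_diag3, SD_cross13 r (by linarith), SD_cross31 r (by linarith),
    strip_area 0 (1/3) r hr0 (by norm_num; linarith),
    strip_area (1/3) (2/3) r hr0 (by norm_num; linarith),
    strip_area (2/3) 1 r hr0 (by norm_num; linarith)] at hd
  simp only [measure_empty, mul_zero, add_zero, cm1, cm2] at hd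
  have hb12 : c1 * c2 * (volume.prod volume) (SD r ∩ I1 ×ˢ I2) ≤ ENNReal.ofReal (18/25*(r*r)) := by
    rw [← cm12 (r*r), ENNReal.ofReal_mul hr0.le]
    refine mul_le_mul_right ?_ _
    calc (volume.prod volume) (SD r ∩ I1 ×ˢ I2)
        ≤ ENNReal.ofReal (1/3 - (1/3 - r)) * ENNReal.ofReal (1/3 + r - 1/3) :=
          vol_rect_le _ _ _ _ _ (SD_cross12 r)
      _ = ENNReal.ofReal r * ENNReal.ofReal r := by norm_num
  have hb21 : c2 * c1 * (volume.prod volume) (SD r ∩ I2 ×ˢ I1) ≤ ENNReal.ofReal (18/25*(r*r)) := by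
    rw [← cm21 (r*r), ENNReal.ofReal_mul hr0.le]
    refine mul_le_mul_right ?_ _
    calc (volume.prod volume) (SD r ∩ I2 ×ˢ I1)
        ≤ ENNReal.ofReal (1/3 + r - 1/3) * ENNReal.ofReal (1/3 - (1/3 - r)) :=
          vol_rect_le _ _ _ _ _ (SD_cross21 r)
      _ = ENNReal.ofReal r * ENNReal.ofReal r := by norm_num
  have hb23 : c2 * c2 * (volume.prod volume) (SD r ∩ I2 ×ˢ I3) ≤ ENNReal.ofReal (36/25*(r*r)) := by
    rw [← cm2 (r*r), ENNReal.ofReal_mul hr0.le]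
    refine mul_le_mul_right ?_ _
    calc (volume.prod volume) (SD r ∩ I2 ×ˢ I3)
        ≤ ENNReal.ofReal (2/3 - (2/3 - r)) * ENNReal.ofReal (2/3 + r - 2/3) :=
          vol_rect_le _ _ _ _ _ (SD_cross23 r)
      _ = ENNReal.ofReal r * ENNReal.ofReal r := by norm_num
  have hb32 : c2 * c2 * (volume.prod volume) (SD r ∩ I3 ×ˢ I2) ≤ ENNReal.ofReal (36/25*(r*r)) := by
    rw [← cm2 (r*r), ENNReal.ofReal_mul hr0.le]
    refine mul_le_mul_right ?_ _
    calc (volume.prod volume) (SD r ∩ I3 ×ˢ I2)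
        ≤ ENNReal.ofReal (2/3 + r - 2/3) * ENNReal.ofReal (2/3 - (2/3 - r)) :=
          vol_rect_le _ _ _ _ _ (SD_cross32 r)
      _ = ENNReal.ofReal r * ENNReal.ofReal r := by norm_num
  constructor
  · rw [hd]
    calc ENNReal.ofReal (54/25*r - 81/25*r^2)
        = ENNReal.ofReal (9/25*(2*r*(1/3-0) - r^2)) + ENNReal.ofReal (36/25*(2*r*(2/3-1/3) - r^2))
          + ENNReal.ofReal (36/25*(2*r*(1-2/3) - r^2)) := by
          rw [ofReal_add3 _ _ _ (by nlinarith) (by nlinarith) (by nlinarith)]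
          congr 1; ring
      _ ≤ _ := by
          have hre : c1 * c1 * ENNReal.ofReal (2*r*(1/3-0) - r^2)
              + c1 * c2 * (volume.prod volume) (SD r ∩ I1 ×ˢ I2)
              + c2 * c1 * (volume.prod volume) (SD r ∩ I2 ×ˢ I1)
              + c2 * c2 * ENNReal.ofReal (2*r*(2/3-1/3) - r^2)
              + c2 * c2 * (volume.prod volume) (SD r ∩ I2 ×ˢ I3)
              + c2 * c2 * (volume.prod volume) (SD r ∩ I3 ×ˢ I2)
              + c2 * c2 * ENNReal.ofReal (2*r*(1-2/3) - r^2)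
              = (c1 * c1 * ENNReal.ofReal (2*r*(1/3-0) - r^2)
                + c2 * c2 * ENNReal.ofReal (2*r*(2/3-1/3) - r^2)
                + c2 * c2 * ENNReal.ofReal (2*r*(1-2/3) - r^2))
              + (c1 * c2 * (volume.prod volume) (SD r ∩ I1 ×ˢ I2)
                + c2 * c1 * (volume.prod volume) (SD r ∩ I2 ×ˢ I1)
                + c2 * c2 * (volume.prod volume) (SD r ∩ I2 ×ˢ I3)
                + c2 * c2 * (volume.prod volume) (SD r ∩ I3 ×ˢ I2)) := by ring
          simp only [cm1, cm2] at hre ⊢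
          rw [hre]
          exact le_self_add
  · rw [hd]
    calc _ ≤ ENNReal.ofReal (9/25*(2*r*(1/3-0) - r^2)) + ENNReal.ofReal (18/25*(r*r))
          + ENNReal.ofReal (18/25*(r*r)) + ENNReal.ofReal (36/25*(2*r*(2/3-1/3) - r^2))
          + ENNReal.ofReal (36/25*(r*r)) + ENNReal.ofReal (36/25*(r*r))
          + ENNReal.ofReal (36/25*(2*r*(1-2/3) - r^2)) :=
          add_le_add (add_le_add (add_le_add (add_le_add (add_le_add (add_le_add le_rfl hb12)
            hb21) le_rfl) hb23) hb32) le_rfl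
      _ = _ := by
          rw [ofReal_add7 _ _ _ _ _ _ _ (by nlinarith) (by nlinarith) (by nlinarith)
            (by nlinarith) (by nlinarith) (by nlinarith) (by nlinarith)]
          congr 1; ring

lemma num_bounds (T : ℝ → ℝ)
    (hT : ∀ x, T x = if x < 1/3 then 3*x else if x < 2/3 then 5/3 - 2*x else 3*x - 2)
    (h : ℝ → ℝ) (hh : ∀ x, h x = if x < 1/3 then 3/5 else 6/5)
    (μ : Measure ℝ)
    (hμ : μ = (volume.restrict (Set.Ico (0:ℝ) 1)).withDensity
      fun x => ENNReal.ofReal (h x))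
    (r : ℝ) (hr0 : 0 < r) (hr1 : r ≤ 1/10) :
    ENNReal.ofReal (22/25*r - 14/25*r^2) ≤ (μ.prod μ) (SN T r) ∧
    (μ.prod μ) (SN T r) ≤ ENNReal.ofReal (22/25*r + 94/25*r^2) := by
  have hd := prod_apply_decomp h hh μ hμ (SN T r) (SN_meas T hT r)
  have h13 : (volume.prod volume) (SN T r ∩ I1 ×ˢ I3) = 0 := by
    refine measure_mono_null (inter_subset_inter (SN_subset_SD T r) Subset.rfl) ?_
    rw [SD_cross13 r (by linarith)]; exact measure_empty
  have h31 : (volume.prod volume) (SN T r ∩ I3 ×ˢ I1) = 0 := by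
    refine measure_mono_null (inter_subset_inter (SN_subset_SD T r) Subset.rfl) ?_
    rw [SD_cross31 r (by linarith)]; exact measure_empty
  rw [SN_diag1 T hT r hr0, SN_diag2 T hT r hr0, SN_diag3 T hT r hr0, h13, h31,
    strip_area 0 (1/3) (r/3) (by linarith) (by norm_num; linarith),
    strip_area (1/3) (2/3) (r/2) (by linarith) (by norm_num; linarith),
    strip_area (2/3) 1 (r/3) (by linarith) (by norm_num; linarith)] at hd
  simp only [mul_zero, add_zero, cm1, cm2] at hd
  have hb12 : c1 * c2 * (volume.prod volume) (SN T r ∩ I1 ×ˢ I2) ≤ ENNReal.ofReal (18/25*(r*r)) := by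
    rw [← cm12 (r*r), ENNReal.ofReal_mul hr0.le]
    refine mul_le_mul_right ?_ _
    calc (volume.prod volume) (SN T r ∩ I1 ×ˢ I2)
        ≤ ENNReal.ofReal (1/3 - (1/3 - r)) * ENNReal.ofReal (1/3 + r - 1/3) :=
          vol_rect_le _ _ _ _ _ (fun p hp => SD_cross12 r ⟨SN_subset_SD T r hp.1, hp.2⟩)
      _ = ENNReal.ofReal r * ENNReal.ofReal r := by norm_num
  have hb21 : c2 * c1 * (volume.prod volume) (SN T r ∩ I2 ×ˢ I1) ≤ ENNReal.ofReal (18/25*(r*r)) := by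
    rw [← cm21 (r*r), ENNReal.ofReal_mul hr0.le]
    refine mul_le_mul_right ?_ _
    calc (volume.prod volume) (SN T r ∩ I2 ×ˢ I1)
        ≤ ENNReal.ofReal (1/3 + r - 1/3) * ENNReal.ofReal (1/3 - (1/3 - r)) :=
          vol_rect_le _ _ _ _ _ (fun p hp => SD_cross21 r ⟨SN_subset_SD T r hp.1, hp.2⟩)
      _ = ENNReal.ofReal r * ENNReal.ofReal r := by norm_num
  have hb23 : c2 * c2 * (volume.prod volume) (SN T r ∩ I2 ×ˢ I3) ≤ ENNReal.ofReal (36/25*(r*r)) := by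
    rw [← cm2 (r*r), ENNReal.ofReal_mul hr0.le]
    refine mul_le_mul_right ?_ _
    calc (volume.prod volume) (SN T r ∩ I2 ×ˢ I3)
        ≤ ENNReal.ofReal (2/3 - (2/3 - r)) * ENNReal.ofReal (2/3 + r - 2/3) :=
          vol_rect_le _ _ _ _ _ (fun p hp => SD_cross23 r ⟨SN_subset_SD T r hp.1, hp.2⟩)
      _ = ENNReal.ofReal r * ENNReal.ofReal r := by norm_num
  have hb32 : c2 * c2 * (volume.prod volume) (SN T r ∩ I3 ×ˢ I2) ≤ ENNReal.ofReal (36/25*(r*r)) := by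
    rw [← cm2 (r*r), ENNReal.ofReal_mul hr0.le]
    refine mul_le_mul_right ?_ _
    calc (volume.prod volume) (SN T r ∩ I3 ×ˢ I2)
        ≤ ENNReal.ofReal (2/3 + r - 2/3) * ENNReal.ofReal (2/3 - (2/3 - r)) :=
          vol_rect_le _ _ _ _ _ (fun p hp => SD_cross32 r ⟨SN_subset_SD T r hp.1, hp.2⟩)
      _ = ENNReal.ofReal r * ENNReal.ofReal r := by norm_num
  constructor
  · rw [hd]
    calc ENNReal.ofReal (22/25*r - 14/25*r^2)
        = ENNReal.ofReal (9/25*(2*(r/3)*(1/3-0) - (r/3)^2))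
          + ENNReal.ofReal (36/25*(2*(r/2)*(2/3-1/3) - (r/2)^2))
          + ENNReal.ofReal (36/25*(2*(r/3)*(1-2/3) - (r/3)^2)) := by
          rw [ofReal_add3 _ _ _ (by nlinarith) (by nlinarith) (by nlinarith)]
          congr 1; ring
      _ ≤ _ := by
          have hre : c1 * c1 * ENNReal.ofReal (2*(r/3)*(1/3-0) - (r/3)^2)
              + c1 * c2 * (volume.prod volume) (SN T r ∩ I1 ×ˢ I2)
              + c2 * c1 * (volume.prod volume) (SN T r ∩ I2 ×ˢ I1)
              + c2 * c2 * ENNReal.ofReal (2*(r/2)*(2/3-1/3) - (r/2)^2)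
              + c2 * c2 * (volume.prod volume) (SN T r ∩ I2 ×ˢ I3)
              + c2 * c2 * (volume.prod volume) (SN T r ∩ I3 ×ˢ I2)
              + c2 * c2 * ENNReal.ofReal (2*(r/3)*(1-2/3) - (r/3)^2)
              = (c1 * c1 * ENNReal.ofReal (2*(r/3)*(1/3-0) - (r/3)^2)
                + c2 * c2 * ENNReal.ofReal (2*(r/2)*(2/3-1/3) - (r/2)^2)
                + c2 * c2 * ENNReal.ofReal (2*(r/3)*(1-2/3) - (r/3)^2))
              + (c1 * c2 * (volume.prod volume) (SN T r ∩ I1 ×ˢ I2)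
                + c2 * c1 * (volume.prod volume) (SN T r ∩ I2 ×ˢ I1)
                + c2 * c2 * (volume.prod volume) (SN T r ∩ I2 ×ˢ I3)
                + c2 * c2 * (volume.prod volume) (SN T r ∩ I3 ×ˢ I2)) := by ring
          simp only [cm1, cm2] at hre ⊢
          rw [hre]
          exact le_self_add
  · rw [hd]
    calc _ ≤ ENNReal.ofReal (9/25*(2*(r/3)*(1/3-0) - (r/3)^2)) + ENNReal.ofReal (18/25*(r*r))
          + ENNReal.ofReal (18/25*(r*r))
          + ENNReal.ofReal (36/25*(2*(r/2)*(2/3-1/3) - (r/2)^2))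
          + ENNReal.ofReal (36/25*(r*r)) + ENNReal.ofReal (36/25*(r*r))
          + ENNReal.ofReal (36/25*(2*(r/3)*(1-2/3) - (r/3)^2)) :=
          add_le_add (add_le_add (add_le_add (add_le_add (add_le_add (add_le_add le_rfl hb12)
            hb21) le_rfl) hb23) hb32) le_rfl
      _ = _ := by
          rw [ofReal_add7 _ _ _ _ _ _ _ (by nlinarith) (by nlinarith) (by nlinarith)
            (by nlinarith) (by nlinarith) (by nlinarith) (by nlinarith)]
          congr 1; ring

lemma lim_L : Tendsto (fun r : ℝ => ENNReal.ofReal ((22 - 14*r)/(54 + 27*r)))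
    (nhdsWithin 0 (Set.Ioi 0)) (nhds (11/27 : ℝ≥0∞)) := by
  have hf : Tendsto (fun r : ℝ => (22 - 14*r)/(54 + 27*r)) (nhds 0) (nhds (11/27 : ℝ)) := by
    have : ContinuousAt (fun r : ℝ => (22 - 14*r)/(54 + 27*r)) 0 := by
      apply ContinuousAt.div
      · fun_prop
      · fun_prop
      · norm_num
    have h0 : (fun r : ℝ => (22 - 14*r)/(54 + 27*r)) 0 = 11/27 := by norm_num
    rw [← h0]
    exact this.tendsto
  have h3 : ENNReal.ofReal ((11:ℝ)/27) = (11/27 : ℝ≥0∞) := by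
    rw [ENNReal.ofReal_div_of_pos (by norm_num : (0:ℝ) < 27)]; norm_num
  rw [← h3]
  exact (ENNReal.continuous_ofReal.continuousAt.tendsto).comp
    (hf.mono_left nhdsWithin_le_nhds)

lemma lim_U : Tendsto (fun r : ℝ => ENNReal.ofReal ((22 + 94*r)/(54 - 81*r)))
    (nhdsWithin 0 (Set.Ioi 0)) (nhds (11/27 : ℝ≥0∞)) := by
  have hf : Tendsto (fun r : ℝ => (22 + 94*r)/(54 - 81*r)) (nhds 0) (nhds (11/27 : ℝ)) := by
    have : ContinuousAt (fun r : ℝ => (22 + 94*r)/(54 - 81*r)) 0 := by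
      apply ContinuousAt.div
      · fun_prop
      · fun_prop
      · norm_num
    have h0 : (fun r : ℝ => (22 + 94*r)/(54 - 81*r)) 0 = 11/27 := by norm_num
    rw [← h0]
    exact this.tendsto
  have h3 : ENNReal.ofReal ((11:ℝ)/27) = (11/27 : ℝ≥0∞) := by
    rw [ENNReal.ofReal_div_of_pos (by norm_num : (0:ℝ) < 27)]; norm_num
  rw [← h3]
  exact (ENNReal.continuous_ofReal.continuousAt.tendsto).comp
    (hf.mono_left nhdsWithin_le_nhds)

/-- Dynamical extremal index (k = 2) of the three-branch Markov map `T` with invariant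
density `h` (`3/5` on `[0,1/3)`, `6/5` on `[1/3,1)`): the proportion of the
`r`-neighborhood of the diagonal returning to itself under `T × T` tends to
`(∫ h²/|DT|)/(∫ h²) = 11/27` as `r → 0⁺` (hence `θ₂ = 16/27`). -/
theorem stmt16 (T : ℝ → ℝ)
    (hT : ∀ x, T x = if x < 1/3 then 3*x else if x < 2/3 then 5/3 - 2*x else 3*x - 2)
    (h : ℝ → ℝ) (hh : ∀ x, h x = if x < 1/3 then 3/5 else 6/5)
    (μ : Measure ℝ)
    (hμ : μ = (volume.restrict (Set.Ico (0:ℝ) 1)).withDensity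
      fun x => ENNReal.ofReal (h x)) :
    Tendsto (fun r : ℝ =>
        (μ.prod μ) {x : ℝ × ℝ | x.1 ∈ Set.Ico (0:ℝ) 1 ∧ x.2 ∈ Set.Ico (0:ℝ) 1 ∧
            |x.1 - x.2| < r ∧ |T x.1 - T x.2| < r}
          / (μ.prod μ) {x : ℝ × ℝ | x.1 ∈ Set.Ico (0:ℝ) 1 ∧ x.2 ∈ Set.Ico (0:ℝ) 1 ∧
            |x.1 - x.2| < r})
      (nhdsWithin 0 (Set.Ioi 0)) (nhds (11/27 : ℝ≥0∞)) := by
  have hev : ∀ᶠ r in nhdsWithin (0:ℝ) (Set.Ioi 0), r ∈ Ioo (0:ℝ) (1/10) :=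
    Ioo_mem_nhdsGT_of_mem (by constructor <;> norm_num)
  have hfun : (fun r : ℝ =>
        (μ.prod μ) {x : ℝ × ℝ | x.1 ∈ Set.Ico (0:ℝ) 1 ∧ x.2 ∈ Set.Ico (0:ℝ) 1 ∧
            |x.1 - x.2| < r ∧ |T x.1 - T x.2| < r}
          / (μ.prod μ) {x : ℝ × ℝ | x.1 ∈ Set.Ico (0:ℝ) 1 ∧ x.2 ∈ Set.Ico (0:ℝ) 1 ∧
            |x.1 - x.2| < r})
      = fun r : ℝ => (μ.prod μ) (SN T r) / (μ.prod μ) (SD r) := rfl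
  rw [hfun]
  apply tendsto_of_tendsto_of_tendsto_of_le_of_le' lim_L lim_U
  · filter_upwards [hev] with r hr
    obtain ⟨hr0, hr1⟩ := hr
    have hnum := (num_bounds T hT h hh μ hμ r hr0 hr1.le).1
    have hden := (den_bounds h hh μ hμ r hr0 hr1.le).2
    have heq : ENNReal.ofReal ((22 - 14*r)/(54 + 27*r))
        = ENNReal.ofReal (22/25*r - 14/25*r^2) / ENNReal.ofReal (54/25*r + 27/25*r^2) := by
      rw [← ENNReal.ofReal_div_of_pos (by nlinarith : (0:ℝ) < 54/25*r + 27/25*r^2)]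
      congr 1
      rw [div_eq_div_iff (by norm_num; nlinarith) (by nlinarith)]
      ring
    rw [heq]
    exact ENNReal.div_le_div hnum hden
  · filter_upwards [hev] with r hr
    obtain ⟨hr0, hr1⟩ := hr
    have hnum := (num_bounds T hT h hh μ hμ r hr0 hr1.le).2
    have hden := (den_bounds h hh μ hμ r hr0 hr1.le).1
    have heq : ENNReal.ofReal ((22 + 94*r)/(54 - 81*r))
        = ENNReal.ofReal (22/25*r + 94/25*r^2) / ENNReal.ofReal (54/25*r - 81/25*r^2) := by
      rw [← ENNReal.ofReal_div_of_pos (by nlinarith : (0:ℝ) < 54/25*r - 81/25*r^2)]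
      congr 1
      rw [div_eq_div_iff (by nlinarith) (by nlinarith)]
      ring
    rw [heq]
    exact ENNReal.div_le_div hnum hden
end

section
/- Let T : [0,1) → [0,1) be the piecewise linear Markov map T(x) = 3x for x ∈ [0,1/3), T(x) = 5/3 − 2x for x ∈ [1/3,2/3), T(x) = 3x − 2 for x ∈ [2/3,1), let h = 3/5 on [0,1/3) and h = 6/5 on [1/3,1), and let |T'| be the piecewise constant function equal to 3 on [0,1/3), 2 on [1/3,2/3), 3 on [2/3,1). Then for every integer k ≥ 0, ∫_0^1 h(x)² / ∏_{j=0}^{k−1} |T'(T^j x)| dx = (9/25) · [ (3√145 − 37)·(17 − √145)^k + (37 + 3√145)·(17 + √145)^k ] / (2 · 72^k · √145). (In particular the values are 27/25, 11/25, 8/45 for k = 0, 1, 2; these integrals determine the limiting return-time distribution functions α̂_{k+1} of the neighborhood of the diagonal, and the associated cluster size distribution is not geometric, so the statistics of visits is compound Poisson but not Pólya–Aeppli.) -/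
open MeasureTheory Set

/-- For the three-branch Markov map `T` with invariant density `h` (`3/5` on `[0,1/3)`,
`6/5` on `[1/3,1)`) and `|T'|` equal to `3, 2, 3` on the three branches, for every
`k ≥ 0`:
`∫₀¹ h(x)²/|DT^k(x)| dx
  = (9/25)·[(3√145 − 37)(17 − √145)^k + (37 + 3√145)(17 + √145)^k]/(2·72^k·√145)`,
where `|DT^k(x)| = ∏_{j<k} |T'(T^j x)|`. -/
theorem stmt17 (T : ℝ → ℝ)
    (hT : ∀ x, T x = if x < 1/3 then 3*x else if x < 2/3 then 5/3 - 2*x else 3*x - 2)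
    (h : ℝ → ℝ) (hh : ∀ x, h x = if x < 1/3 then 3/5 else 6/5)
    (Tder : ℝ → ℝ)
    (hTder : ∀ x, Tder x = if x < 1/3 then 3 else if x < 2/3 then 2 else 3)
    (k : ℕ) :
    ∫ x in Set.Ico (0:ℝ) 1, h x ^ 2 / ∏ j ∈ Finset.range k, Tder (T^[j] x)
      = (9/25) * ((3 * Real.sqrt 145 - 37) * (17 - Real.sqrt 145) ^ k
          + (37 + 3 * Real.sqrt 145) * (17 + Real.sqrt 145) ^ k)
        / (2 * 72 ^ k * Real.sqrt 145) := by
  set s : ℝ := Real.sqrt 145 with hs_def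
  have hs2 : s ^ 2 = 145 := Real.sq_sqrt (by norm_num)
  have hspos : 0 < s := Real.sqrt_pos.mpr (by norm_num)
  -- measurability
  have mT : Measurable T := by
    have hTe : T = fun x => if x < 1/3 then 3*x else if x < 2/3 then 5/3 - 2*x else 3*x - 2 :=
      funext hT
    rw [hTe]
    exact Measurable.ite (measurableSet_lt measurable_id measurable_const) (by fun_prop)
      (Measurable.ite (measurableSet_lt measurable_id measurable_const) (by fun_prop) (by fun_prop))
  have mTder : Measurable Tder := by
    have hTe : Tder = fun x => if x < 1/3 then (3:ℝ) else if x < 2/3 then 2 else 3 := funext hTder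
    rw [hTe]
    exact Measurable.ite (measurableSet_lt measurable_id measurable_const) (by fun_prop)
      (Measurable.ite (measurableSet_lt measurable_id measurable_const) (by fun_prop) (by fun_prop))
  have mh : Measurable h := by
    have he : h = fun x => if x < 1/3 then (3/5:ℝ) else 6/5 := funext hh
    rw [he]
    exact Measurable.ite (measurableSet_lt measurable_id measurable_const) (by fun_prop)
      (by fun_prop)
  have hTder1 : ∀ y, (1:ℝ) ≤ Tder y := by
    intro y; rw [hTder]; split_ifs <;> norm_num
  set g : ℕ → ℝ → ℝ := fun k x => (∏ j ∈ Finset.range k, Tder (T^[j] x))⁻¹ with hg_def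
  have mg : ∀ k, Measurable (g k) := fun k =>
    (Finset.measurable_prod _ (fun j _ => mTder.comp (mT.iterate j))).inv
  have g_nonneg : ∀ k x, 0 ≤ g k x := fun k x =>
    inv_nonneg.mpr (Finset.prod_nonneg fun j _ => le_trans zero_le_one (hTder1 _))
  have g_le_one : ∀ k x, g k x ≤ 1 := by
    intro k x
    have h1 : (1:ℝ) ≤ ∏ j ∈ Finset.range k, Tder (T^[j] x) := by
      calc (1:ℝ) = ∏ _j ∈ Finset.range k, (1:ℝ) := by simp
        _ ≤ ∏ j ∈ Finset.range k, Tder (T^[j] x) :=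
            Finset.prod_le_prod (fun j _ => zero_le_one) (fun j _ => hTder1 _)
    exact inv_le_one_of_one_le₀ h1
  have ig : ∀ k a b, IntervalIntegrable (g k) volume a b := by
    intro k a b
    rw [intervalIntegrable_iff]
    refine Measure.integrableOn_of_bounded (M := 1) measure_Ioc_lt_top.ne
      ((mg k).aestronglyMeasurable) ?_
    refine Filter.Eventually.of_forall fun x => ?_
    rw [Real.norm_eq_abs, abs_of_nonneg (g_nonneg k x)]
    exact g_le_one k x
  -- bridge between Ico set integrals and interval integrals
  have icoeq : ∀ (F : ℝ → ℝ) (a b : ℝ), a ≤ b →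
      (∫ x in Set.Ico a b, F x) = ∫ x in a..b, F x := by
    intro F a b hab
    rw [intervalIntegral.integral_of_le hab, integral_Ico_eq_integral_Ioo,
      integral_Ioc_eq_integral_Ioo]
  -- sequences (numerators)
  set Au : ℕ → ℝ := fun k => (1/6 - 7*s/870) * (17 - s)^k + (1/6 + 7*s/870) * (17 + s)^k
    with hAu_def
  set Bu : ℕ → ℝ := fun k => (1/6 - 19*s/870) * (17 - s)^k + (1/6 + 19*s/870) * (17 + s)^k
    with hBu_def
  have hArec : ∀ k, Au (k+1) = 8 * (2 * Au k + Bu k) := by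
    intro k
    simp only [hAu_def, hBu_def, pow_succ]
    linear_combination ((7/870) * ((17 - s)^k + (17 + s)^k)) * hs2
  have hBrec : ∀ k, Bu (k+1) = 18 * (Au k + Bu k) := by
    intro k
    simp only [hAu_def, hBu_def, pow_succ]
    linear_combination ((19/870) * ((17 - s)^k + (17 + s)^k)) * hs2
  have h72 : ∀ k : ℕ, ((72:ℝ)^k) ≠ 0 := fun k => by positivity
  -- main induction
  have key : ∀ k, (∫ x in (0:ℝ)..(1/3), g k x) = Au k / 72^k ∧
      (∫ x in (1/3:ℝ)..(2/3), g k x) = Bu k / 72^k ∧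
      (∫ x in (2/3:ℝ)..1, g k x) = Au k / 72^k := by
    intro k
    induction k with
    | zero =>
      have hg0 : g 0 = fun _ => (1:ℝ) := by
        funext x; simp [hg_def]
      rw [hg0]
      simp only [hAu_def, hBu_def, pow_zero, intervalIntegral.integral_const, smul_eq_mul,
        mul_one, div_one]
      refine ⟨by ring, by ring, by ring⟩
    | succ k ih =>
      obtain ⟨ihA, ihB, ihC⟩ := ih
      have total : (∫ x in (0:ℝ)..1, g k x) = (2 * Au k + Bu k) / 72^k := by
        rw [← intervalIntegral.integral_add_adjacent_intervals (ig k 0 (1/3)) (ig k (1/3) 1),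
          ← intervalIntegral.integral_add_adjacent_intervals (ig k (1/3) (2/3)) (ig k (2/3) 1),
          ihA, ihB, ihC]
        ring
      have half : (∫ x in (1/3:ℝ)..1, g k x) = (Au k + Bu k) / 72^k := by
        rw [← intervalIntegral.integral_add_adjacent_intervals (ig k (1/3) (2/3)) (ig k (2/3) 1),
          ihB, ihC]
        ring
      -- the product recursion, pointwise
      have gsucc : ∀ x, g (k+1) x = (∏ j ∈ Finset.range k, Tder (T^[j] (T x)))⁻¹ * (Tder x)⁻¹ := by
        intro x
        simp only [hg_def]
        rw [Finset.prod_range_succ']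
        simp only [Function.iterate_succ_apply, Function.iterate_zero_apply, mul_inv]
      -- piece A
      have stepA : (∫ x in (0:ℝ)..(1/3), g (k+1) x) = Au (k+1) / 72^(k+1) := by
        have pw : ∀ x ∈ Set.Ico (0:ℝ) (1/3), g (k+1) x = 3⁻¹ * g k (3*x) := by
          intro x hx
          have h1 : Tder x = 3 := by rw [hTder, if_pos hx.2]
          have h2 : T x = 3*x := by rw [hT, if_pos hx.2]
          rw [gsucc, h1, h2]
          simp only [hg_def]; ring
        rw [← icoeq _ _ _ (by norm_num), setIntegral_congr_fun measurableSet_Ico pw,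
          icoeq _ _ _ (by norm_num), intervalIntegral.integral_const_mul,
          intervalIntegral.integral_comp_mul_left (g k) (by norm_num : (3:ℝ) ≠ 0)]
        norm_num
        rw [total, hArec k, pow_succ]
        field_simp
        ring
      -- piece B
      have stepB : (∫ x in (1/3:ℝ)..(2/3), g (k+1) x) = Bu (k+1) / 72^(k+1) := by
        have pw : ∀ x ∈ Set.Ico (1/3:ℝ) (2/3), g (k+1) x = 2⁻¹ * g k (5/3 - 2*x) := by
          intro x hx
          have hx1 : ¬ (x < 1/3) := not_lt.mpr hx.1
          have h1 : Tder x = 2 := by rw [hTder, if_neg hx1, if_pos hx.2]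
          have h2 : T x = 5/3 - 2*x := by rw [hT, if_neg hx1, if_pos hx.2]
          rw [gsucc, h1, h2]
          simp only [hg_def]; ring
        rw [← icoeq _ _ _ (by norm_num), setIntegral_congr_fun measurableSet_Ico pw,
          icoeq _ _ _ (by norm_num), intervalIntegral.integral_const_mul,
          intervalIntegral.integral_comp_sub_mul (g k) (by norm_num : (2:ℝ) ≠ 0) (5/3)]
        norm_num
        rw [half, hBrec k, pow_succ]
        field_simp
        ring
      -- piece C
      have stepC : (∫ x in (2/3:ℝ)..1, g (k+1) x) = Au (k+1) / 72^(k+1) := by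
        have pw : ∀ x ∈ Set.Ico (2/3:ℝ) 1, g (k+1) x = 3⁻¹ * g k (3*x - 2) := by
          intro x hx
          have hx1 : ¬ (x < 1/3) := by push_neg; linarith [hx.1]
          have hx2 : ¬ (x < 2/3) := not_lt.mpr hx.1
          have h1 : Tder x = 3 := by rw [hTder, if_neg hx1, if_neg hx2]
          have h2 : T x = 3*x - 2 := by rw [hT, if_neg hx1, if_neg hx2]
          rw [gsucc, h1, h2]
          simp only [hg_def]; ring
        rw [← icoeq _ _ _ (by norm_num), setIntegral_congr_fun measurableSet_Ico pw,
          icoeq _ _ _ (by norm_num), intervalIntegral.integral_const_mul,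
          intervalIntegral.integral_comp_mul_sub (g k) (by norm_num : (3:ℝ) ≠ 0) 2]
        norm_num
        rw [total, hArec k, pow_succ]
        field_simp
        ring
      exact ⟨stepA, stepB, stepC⟩
  obtain ⟨kA, kB, kC⟩ := key k
  -- the integrand as h^2 * g
  have hFg : ∀ x, h x ^ 2 / (∏ j ∈ Finset.range k, Tder (T^[j] x)) = h x ^ 2 * g k x := by
    intro x; rw [div_eq_mul_inv]
  have mF : Measurable fun x => h x ^ 2 * g k x := by
    exact ((mh.pow_const 2).mul (mg k))
  have iF : ∀ a b : ℝ, IntervalIntegrable (fun x => h x ^ 2 * g k x) volume a b := by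
    intro a b
    rw [intervalIntegrable_iff]
    refine Measure.integrableOn_of_bounded (M := 2) measure_Ioc_lt_top.ne
      mF.aestronglyMeasurable ?_
    refine Filter.Eventually.of_forall fun x => ?_
    have hb : (0:ℝ) ≤ h x ∧ h x ≤ 6/5 := by
      rw [hh]; split_ifs <;> norm_num
    have h2 : h x ^ 2 ≤ 2 := by nlinarith [hb.1, hb.2]
    have hnn : 0 ≤ h x ^ 2 * g k x := mul_nonneg (by positivity) (g_nonneg k x)
    rw [Real.norm_eq_abs, abs_of_nonneg hnn]
    calc h x ^ 2 * g k x ≤ h x ^ 2 * 1 := by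
          refine mul_le_mul_of_nonneg_left (g_le_one k x) (by positivity)
      _ ≤ 2 := by rw [mul_one]; exact h2
  -- rewrite the integral
  have hsplit : (∫ x in Set.Ico (0:ℝ) 1, h x ^ 2 / ∏ j ∈ Finset.range k, Tder (T^[j] x))
      = (∫ x in (0:ℝ)..(1/3), h x ^ 2 * g k x) + (∫ x in (1/3:ℝ)..(2/3), h x ^ 2 * g k x)
        + (∫ x in (2/3:ℝ)..1, h x ^ 2 * g k x) := by
    have : (∫ x in Set.Ico (0:ℝ) 1, h x ^ 2 / ∏ j ∈ Finset.range k, Tder (T^[j] x))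
        = ∫ x in (0:ℝ)..1, h x ^ 2 * g k x := by
      rw [show (fun x => h x ^ 2 / ∏ j ∈ Finset.range k, Tder (T^[j] x))
          = fun x => h x ^ 2 * g k x from funext hFg]
      exact icoeq _ _ _ (by norm_num)
    rw [this, ← intervalIntegral.integral_add_adjacent_intervals (iF 0 (1/3)) (iF (1/3) 1),
      ← intervalIntegral.integral_add_adjacent_intervals (iF (1/3) (2/3)) (iF (2/3) 1)]
    ring
  have pieceA : (∫ x in (0:ℝ)..(1/3), h x ^ 2 * g k x) = (9/25) * (Au k / 72^k) := by
    have pw : ∀ x ∈ Set.Ico (0:ℝ) (1/3), h x ^ 2 * g k x = (9/25) * g k x := by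
      intro x hx
      rw [hh, if_pos hx.2]; norm_num
    rw [← icoeq _ _ _ (by norm_num), setIntegral_congr_fun measurableSet_Ico pw,
      icoeq _ _ _ (by norm_num), intervalIntegral.integral_const_mul, kA]
  have pieceB : (∫ x in (1/3:ℝ)..(2/3), h x ^ 2 * g k x) = (36/25) * (Bu k / 72^k) := by
    have pw : ∀ x ∈ Set.Ico (1/3:ℝ) (2/3), h x ^ 2 * g k x = (36/25) * g k x := by
      intro x hx
      rw [hh, if_neg (not_lt.mpr hx.1)]; norm_num
    rw [← icoeq _ _ _ (by norm_num), setIntegral_congr_fun measurableSet_Ico pw,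
      icoeq _ _ _ (by norm_num), intervalIntegral.integral_const_mul, kB]
  have pieceC : (∫ x in (2/3:ℝ)..1, h x ^ 2 * g k x) = (36/25) * (Au k / 72^k) := by
    have pw : ∀ x ∈ Set.Ico (2/3:ℝ) 1, h x ^ 2 * g k x = (36/25) * g k x := by
      intro x hx
      have hx1 : ¬ (x < 1/3) := by push_neg; linarith [hx.1]
      rw [hh, if_neg hx1]; norm_num
    rw [← icoeq _ _ _ (by norm_num), setIntegral_congr_fun measurableSet_Ico pw,
      icoeq _ _ _ (by norm_num), intervalIntegral.integral_const_mul, kC]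
  rw [hsplit, pieceA, pieceB, pieceC]
  rw [show 9 / 25 * (Au k / 72 ^ k) + 36 / 25 * (Bu k / 72 ^ k) + 36 / 25 * (Au k / 72 ^ k)
      = (9 / 25 * (5 * Au k + 4 * Bu k)) / 72 ^ k from by ring]
  rw [div_eq_div_iff (h72 k) (by positivity : (2:ℝ) * 72 ^ k * s ≠ 0)]
  simp only [hAu_def, hBu_def]
  linear_combination ((9/25) * (37/145) * (72:ℝ)^k * ((17+s)^k - (17-s)^k)) * hs2
end

section
/- Work on the circle 𝕋 = ℝ/ℤ with Lebesgue (Haar) measure λ and open balls B(z,r). Let m ≥ 2 be an integer, T(x) = m·x mod 1, and let z ∈ 𝕋 and p ≥ 1 satisfy T^p(z) = z. Then lim_{r→0⁺} λ( B(z,r) ∩ T^{-p}(B(z,r)) ) / λ(B(z,r)) = 1/m^p. (This is the value 1/|DT^p(z)| appearing in the extremal index θ = 1 − 1/|DT^p(z)| at a periodic point of period p.) -/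
open MeasureTheory Set Filter Metric
open scoped ENNReal

private lemma stmt18_key (n : ℕ) (hn : 2 ≤ n) (z : UnitAddCircle) (hz : n • z = z) (r : ℝ)
    (hr : 0 < r) (hr' : r < 1 / (2 * n)) :
    ball z r ∩ (fun x : UnitAddCircle => n • x) ⁻¹' ball z r = ball z (r / n) := by
  have hn0 : (0:ℝ) < n := by positivity
  ext x
  simp only [mem_inter_iff, mem_preimage, mem_ball, dist_eq_norm]
  constructor
  · rintro ⟨h1, h2⟩
    set y : UnitAddCircle := x - z with hy
    obtain ⟨t, ht, hty⟩ : ∃ t : ℝ, t ∈ Ico (-(1/2) : ℝ) (-(1/2) + 1) ∧ (t : UnitAddCircle) = y := by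
      refine ⟨(AddCircle.equivIco 1 (-(1/2)) y : ℝ), (AddCircle.equivIco 1 (-(1/2)) y).2, ?_⟩
      exact (AddCircle.equivIco 1 (-(1/2))).symm_apply_apply y
    have htabs : |t| ≤ 1 / 2 := by
      rw [abs_le]; constructor <;> [linarith [ht.1]; linarith [ht.2]]
    have hnt : ‖y‖ = |t| := by
      rw [← hty, AddCircle.norm_coe_eq_abs_iff (p := 1) one_ne_zero]
      simpa using htabs
    have h1' : |t| < r := by rw [← hnt]; exact h1
    have hny : n • x - z = ((n * t : ℝ) : UnitAddCircle) := by
      have : n • x - z = n • y := by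
        rw [hy, smul_sub, hz]
      rw [this, ← hty]
      rw [← AddCircle.coe_nsmul]
      norm_num [nsmul_eq_mul]
    have hnt2 : |(n : ℝ) * t| ≤ 1 / 2 := by
      rw [abs_mul, abs_of_pos hn0]
      calc (n:ℝ) * |t| ≤ n * r := by nlinarith
        _ ≤ 1/2 := by rw [lt_div_iff₀ (by positivity)] at hr'; nlinarith
    have h2e : ‖((n * t : ℝ) : UnitAddCircle)‖ = |(n:ℝ) * t| :=
      (AddCircle.norm_coe_eq_abs_iff (p := 1) one_ne_zero).mpr (by simpa using hnt2)
    have h2' : |(n:ℝ) * t| < r := by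
      rw [hny, h2e] at h2; exact h2
    rw [hnt]
    rw [abs_mul, abs_of_pos hn0] at h2'
    rw [lt_div_iff₀ hn0]
    linarith
  · intro h
    constructor
    · calc ‖x - z‖ < r / n := h
        _ ≤ r := by
            rw [div_le_iff₀ hn0]
            have h2n : (1:ℝ) ≤ n := by exact_mod_cast Nat.one_le_of_lt hn
            exact le_mul_of_one_le_right hr.le h2n
    · have : n • x - z = n • (x - z) := by rw [smul_sub, hz]
      rw [this]
      calc ‖n • (x - z)‖ ≤ n * ‖x - z‖ := norm_nsmul_le
        _ < n * (r / n) := mul_lt_mul_of_pos_left h hn0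
        _ = r := by field_simp

private lemma stmt18_iter (m : ℕ) (T : UnitAddCircle → UnitAddCircle)
    (hT : ∀ x, T x = m • x) : ∀ (k : ℕ) (x : UnitAddCircle), T^[k] x = (m ^ k) • x := by
  intro k
  induction k with
  | zero => simp
  | succ j ih =>
    intro x
    rw [Function.iterate_succ_apply, hT, ih, smul_smul, pow_succ]

private lemma stmt18_vol (z : UnitAddCircle) (s : ℝ) :
    volume (ball z s) = ENNReal.ofReal (min 1 (2 * s)) := by
  rw [← measure_congr AddCircle.closedBall_ae_eq_ball, AddCircle.volume_closedBall]

/-- For `T(x) = m·x mod 1` on the circle and a periodic point `z` with `T^p z = z`,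
`lim_{r→0⁺} λ(B(z,r) ∩ T^{-p}(B(z,r)))/λ(B(z,r)) = 1/m^p = 1/|DT^p(z)|`
(the quantity appearing in the extremal index `θ = 1 − 1/|DT^p(z)|`). -/
theorem stmt18 (m : ℕ) (hm : 2 ≤ m)
    (T : UnitAddCircle → UnitAddCircle) (hT : ∀ x, T x = m • x)
    (z : UnitAddCircle) (p : ℕ) (hp : 1 ≤ p) (hz : T^[p] z = z) :
    Tendsto (fun r : ℝ =>
        volume (ball z r ∩ (T^[p]) ⁻¹' ball z r) / volume (ball z r))
      (nhdsWithin 0 (Set.Ioi 0)) (nhds (1 / (m : ℝ≥0∞) ^ p)) := by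
  set n := m ^ p with hndef
  have hTp : T^[p] = fun x : UnitAddCircle => n • x := funext (stmt18_iter m T hT p)
  have hn : 2 ≤ n := hm.trans (Nat.le_self_pow (by omega) m)
  have hn0 : (0:ℝ) < n := by positivity
  have hzn : n • z = z := by rw [← congrFun hTp z]; exact hz
  have hcast : ((n : ℝ≥0∞))⁻¹ = 1 / (m : ℝ≥0∞) ^ p := by
    rw [hndef, one_div]
    push_cast
    rfl
  refine Tendsto.congr' ?_ (tendsto_const_nhds (x := 1 / (m : ℝ≥0∞) ^ p))
  filter_upwards [Ioo_mem_nhdsGT_of_mem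
    (show (0:ℝ) ∈ Ico (0:ℝ) (1 / (2 * n)) from ⟨le_refl 0, by positivity⟩)] with r hr
  obtain ⟨hr0, hrε⟩ := hr
  rw [hTp, stmt18_key n hn z hzn r hr0 hrε, stmt18_vol, stmt18_vol]
  have h2r : 2 * r < 1 / n := by
    rw [lt_div_iff₀ hn0]; rw [lt_div_iff₀ (by positivity)] at hrε; linarith
  have hn1 : (1:ℝ) ≤ n := by exact_mod_cast Nat.one_le_of_lt hn
  have hmin1 : min 1 (2 * r) = 2 * r := min_eq_right (by
    have : (1:ℝ)/n ≤ 1 := by rw [div_le_one hn0]; exact hn1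
    linarith)
  have hmin2 : min 1 (2 * (r / n)) = 2 * (r / n) := min_eq_right (by
    have h1 : 2 * (r / n) ≤ 2 * r := by
      have := div_le_self hr0.le hn1
      linarith
    have : (1:ℝ)/n ≤ 1 := by rw [div_le_one hn0]; exact hn1
    linarith)
  rw [hmin1, hmin2]
  have hA0 : ENNReal.ofReal (2 * r) ≠ 0 := by
    simp [ENNReal.ofReal_eq_zero]; linarith
  have hfac : ENNReal.ofReal (2 * (r / n)) = ENNReal.ofReal (2 * r) * ((n : ℝ≥0∞))⁻¹ := by
    rw [show 2 * (r / n) = (2 * r) * (n:ℝ)⁻¹ by ring,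
      ENNReal.ofReal_mul (by positivity), ENNReal.ofReal_inv_of_pos hn0,
      ENNReal.ofReal_natCast]
  rw [hfac, ← hcast]
  rw [mul_comm, mul_div_assoc, ENNReal.div_self hA0 ENNReal.ofReal_ne_top, mul_one]
end
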